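/- arXiv:2402.02646 — 10 statements merged into one kernel-verified Lean document; each statement's English description precedes it below -/
import Mathlib

section
/- For every n ≥ 3, the polynomial P_n defined by the recursion P_3 = 1, P_n(t) = P_{n-1}(t)·(1+t) + t·∑_{i=3}^{n-2} C(n-2, i-1)·P_i(t)·P_{n+1-i}(t) has degree n - 3. -/
open Polynomial Finset

theorem stmt1 (P : ℕ → Polynomial ℤ)
    (h3 : P 3 = 1)
    (hrec : ∀ n, 3 < n → P n = P (n-1) * (1 + X) +
      X * ∑ i ∈ Finset.Icc 3 (n-2), ((n-2).choose (i-1) : Polynomial ℤ) * P i * P (n+1-i)) :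
    ∀ n, 3 ≤ n → (P n).natDegree = n - 3 := by
  have hX1 : (1 + X : Polynomial ℤ).Monic := by
    simpa [add_comm] using monic_X_add_C (1 : ℤ)
  have hX1d : (1 + X : Polynomial ℤ).natDegree = 1 := by
    rw [add_comm]; simpa using natDegree_X_add_C (1 : ℤ)
  suffices h : ∀ n, 3 ≤ n → (P n).Monic ∧ (P n).natDegree = n - 3 by
    intro n hn; exact (h n hn).2
  intro n
  induction n using Nat.strong_induction_on with
  | _ n ih =>
    intro hn
    rcases eq_or_lt_of_le hn with h3' | h4
    · rw [← h3', h3]; exact ⟨monic_one, by simp⟩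
    · have hrecn := hrec n h4
      by_cases h5 : n = 4
      · subst h5
        have he : Finset.Icc 3 (4-2) = ∅ := by decide
        rw [he, Finset.sum_empty, mul_zero, add_zero, show 4-1 = 3 from rfl, h3,
          one_mul] at hrecn
        rw [hrecn]
        exact ⟨hX1, by rw [hX1d]⟩
      · have h5' : 5 ≤ n := by omega
        obtain ⟨hm1, hd1⟩ := ih (n-1) (by omega) (by omega)
        have hSd : (∑ i ∈ Finset.Icc 3 (n-2),
            ((n-2).choose (i-1) : Polynomial ℤ) * P i * P (n+1-i)).natDegree ≤ n - 5 := by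
          apply natDegree_sum_le_of_forall_le
          intro i hi
          simp only [Finset.mem_Icc] at hi
          obtain ⟨hmi, hdi⟩ := ih i (by omega) hi.1
          obtain ⟨hmj, hdj⟩ := ih (n+1-i) (by omega) (by omega)
          calc (((n-2).choose (i-1) : Polynomial ℤ) * P i * P (n+1-i)).natDegree
              ≤ (((n-2).choose (i-1) : Polynomial ℤ) * P i).natDegree + (P (n+1-i)).natDegree :=
                natDegree_mul_le
            _ ≤ ((n-2).choose (i-1) : Polynomial ℤ).natDegree + (P i).natDegree
                + (P (n+1-i)).natDegree := by gcongr; exact natDegree_mul_le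
            _ ≤ n - 5 := by
                rw [natDegree_natCast, hdi, hdj]; omega
        have hBd : (X * ∑ i ∈ Finset.Icc 3 (n-2),
            ((n-2).choose (i-1) : Polynomial ℤ) * P i * P (n+1-i)).natDegree ≤ n - 4 := by
          refine le_trans natDegree_mul_le ?_
          rw [natDegree_X]; omega
        have hAm : (P (n-1) * (1 + X)).Monic := hm1.mul hX1
        have hAd : (P (n-1) * (1 + X)).natDegree = n - 3 := by
          rw [hm1.natDegree_mul hX1, hd1, hX1d]; omega
        have hlt : (X * ∑ i ∈ Finset.Icc 3 (n-2),
            ((n-2).choose (i-1) : Polynomial ℤ) * P i * P (n+1-i)).degree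
            < (P (n-1) * (1 + X)).degree := by
          apply degree_lt_degree
          omega
        rw [hrecn]
        exact ⟨hAm.add_of_left hlt, by rw [natDegree_add_eq_left_of_degree_lt hlt, hAd]⟩
end

section
/- For every n ≥ 3, the polynomial P_n defined by the recursion P_3 = 1, P_n(t) = P_{n-1}(t)·(1+t) + t·∑_{i=3}^{n-2} C(n-2, i-1)·P_i(t)·P_{n+1-i}(t) is palindromic: its coefficient of t^i equals its coefficient of t^{n-3-i} for all 0 ≤ i ≤ n-3. -/
open Polynomial Finset

private lemma reflect_sum' {α : Type*} (s : Finset α) (f : α → Polynomial ℤ) (N : ℕ) :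
    Polynomial.reflect N (∑ i ∈ s, f i) = ∑ i ∈ s, Polynomial.reflect N (f i) := by
  induction s using Finset.cons_induction with
  | empty => simp
  | cons a s ha ih => simp [Finset.sum_cons, Polynomial.reflect_add, ih]

theorem stmt2 (P : ℕ → Polynomial ℤ)
    (h3 : P 3 = 1)
    (hrec : ∀ n, 3 < n → P n = P (n-1) * (1 + X) +
      X * ∑ i ∈ Finset.Icc 3 (n-2), ((n-2).choose (i-1) : Polynomial ℤ) * P i * P (n+1-i)) :
    ∀ n, 3 ≤ n → ∀ i ≤ n - 3, (P n).coeff i = (P n).coeff (n - 3 - i) := by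
  have key : ∀ n, 3 ≤ n → (P n).natDegree ≤ n - 3 ∧ Polynomial.reflect (n-3) (P n) = P n := by
    intro n
    induction n using Nat.strong_induction_on with
    | _ n ih =>
      intro hn
      rcases eq_or_lt_of_le hn with h | h
      · rw [← h, h3]; simp
      · -- n ≥ 4
        have IH1 := ih (n-1) (by omega) (by omega)
        have hd1 : (P (n-1)).natDegree ≤ n - 4 := by
          have := IH1.1; omega
        have hr1 : Polynomial.reflect (n-4) (P (n-1)) = P (n-1) := by
          have := IH1.2
          rwa [show n - 1 - 3 = n - 4 by omega] at this
        have hx1 : (1 + X : Polynomial ℤ).natDegree ≤ 1 := by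
          refine le_trans (natDegree_add_le _ _) ?_; simp
        -- bounds for the sum terms
        have hterm : ∀ i ∈ Finset.Icc 3 (n-2),
            (((n-2).choose (i-1) : Polynomial ℤ) * P i * P (n+1-i)).natDegree ≤ n - 5 ∧
            Polynomial.reflect (n-5) (((n-2).choose (i-1) : Polynomial ℤ) * P i * P (n+1-i)) =
              ((n-2).choose (i-1) : Polynomial ℤ) * P i * P (n+1-i) := by
          intro i hi
          simp only [Finset.mem_Icc] at hi
          obtain ⟨hi3, hin⟩ := hi
          have IHi := ih i (by omega) hi3
          have IHj := ih (n+1-i) (by omega) (by omega)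
          have hdi : (P i).natDegree ≤ i - 3 := IHi.1
          have hdj : (P (n+1-i)).natDegree ≤ n - 2 - i := by
            have := IHj.1; omega
          have hri : Polynomial.reflect (i-3) (P i) = P i := IHi.2
          have hrj : Polynomial.reflect (n-2-i) (P (n+1-i)) = P (n+1-i) := by
            have := IHj.2
            rwa [show n + 1 - i - 3 = n - 2 - i by omega] at this
          have hC : (((n-2).choose (i-1) : ℕ) : Polynomial ℤ)
              = C (((n-2).choose (i-1) : ℕ) : ℤ) := by
            simp
          constructor
          · refine le_trans (natDegree_mul_le) ?_
            have h1 : ((((n-2).choose (i-1) : ℕ) : Polynomial ℤ) * P i).natDegree ≤ i - 3 := by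
              refine le_trans (natDegree_mul_le) ?_
              rw [hC]
              simpa using hdi
            omega
          · rw [show n - 5 = (i - 3) + (n - 2 - i) by omega]
            rw [Polynomial.reflect_mul _ _ ?_ hdj]
            · rw [hrj, hC, mul_assoc, reflect_C_mul, hri, mul_assoc]
            · rw [hC]
              refine le_trans (natDegree_mul_le) ?_
              simpa using hdi
        have hS : (∑ i ∈ Finset.Icc 3 (n-2),
            ((n-2).choose (i-1) : Polynomial ℤ) * P i * P (n+1-i)).natDegree ≤ n - 5 := by
          refine Polynomial.natDegree_sum_le_of_forall_le _ _ ?_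
          intro i hi; exact (hterm i hi).1
        rw [hrec n h]
        constructor
        · refine le_trans (natDegree_add_le _ _) ?_
          refine max_le ?_ ?_
          · refine le_trans (natDegree_mul_le) ?_
            omega
          · refine le_trans (natDegree_mul_le) ?_
            have : (X : Polynomial ℤ).natDegree = 1 := natDegree_X
            omega
        · rw [Polynomial.reflect_add]
          have eA : Polynomial.reflect (n-3) (P (n-1) * (1 + X)) = P (n-1) * (1 + X) := by
            rw [show n - 3 = (n - 4) + 1 by omega]
            rw [Polynomial.reflect_mul _ _ hd1 hx1, hr1]
            congr 1
            have : (1 + X : Polynomial ℤ) = C 1 + C 1 * X ^ 1 := by simp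
            rw [this, Polynomial.reflect_add, Polynomial.reflect_C, reflect_C_mul_X_pow]
            simp [revAt_le]
            ring
          have eB : Polynomial.reflect (n-3) (X * ∑ i ∈ Finset.Icc 3 (n-2),
              ((n-2).choose (i-1) : Polynomial ℤ) * P i * P (n+1-i))
              = X * ∑ i ∈ Finset.Icc 3 (n-2),
              ((n-2).choose (i-1) : Polynomial ℤ) * P i * P (n+1-i) := by
            by_cases h5 : 5 ≤ n
            · rw [show n - 3 = 2 + (n - 5) by omega]
              rw [Polynomial.reflect_mul _ _ (by simp : (X : Polynomial ℤ).natDegree ≤ 2) hS]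
              have hX2 : Polynomial.reflect 2 (X : Polynomial ℤ) = X := by
                have : (X : Polynomial ℤ) = C 1 * X ^ 1 := by simp
                rw [this, reflect_C_mul_X_pow]
                norm_num [revAt_le]
              rw [hX2, reflect_sum']
              congr 1
              refine Finset.sum_congr rfl ?_
              intro i hi
              exact (hterm i hi).2
            · have : Finset.Icc 3 (n-2) = ∅ := by
                apply Finset.Icc_eq_empty; omega
              simp [this]
          rw [eA, eB]
  intro n hn i hi
  obtain ⟨hd, hr⟩ := key n hn
  conv_lhs => rw [← hr]
  rw [Polynomial.coeff_reflect, revAt_le hi]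
end

section
/- Let f(t) ∈ ℤ[t] be a symmetric polynomial with center d/2, i.e. the coefficient of t^i in f equals the coefficient of t^{d-i} for all i, and deg f ≤ d. Then there exist unique integers γ_0, …, γ_{⌊d/2⌋} such that f(t) = ∑_{i=0}^{⌊d/2⌋} γ_i · t^i · (1+t)^{d-2i}. -/
open Polynomial Finset

private lemma eval_zero_sum (n : ℕ) (e : ℕ → ℕ) (γ : ℕ → ℤ) :
    (∑ i ∈ Finset.range (n + 1), C (γ i) * X ^ i * (1 + X) ^ (e i)).eval 0 = γ 0 := by
  rw [Polynomial.eval_finset_sum, Finset.sum_eq_single 0]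
  · simp
  · intro i _ hne
    simp [zero_pow hne]
  · intro h
    simp at h

private lemma sum_step (e : ℕ) (γ : ℕ → ℤ) :
    ∑ i ∈ Finset.range ((e + 2) / 2 + 1), C (γ i) * X ^ i * (1 + X) ^ (e + 2 - 2 * i)
      = C (γ 0) * (1 + X) ^ (e + 2)
        + X * ∑ i ∈ Finset.range (e / 2 + 1), C (γ (i + 1)) * X ^ i * (1 + X) ^ (e - 2 * i) := by
  have h2 : (e + 2) / 2 = e / 2 + 1 := by omega
  rw [h2, Finset.sum_range_succ', Finset.mul_sum, add_comm]
  congr 1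
  · simp
  · apply Finset.sum_congr rfl
    intro i _
    have h3 : e + 2 - 2 * (i + 1) = e - 2 * i := by omega
    rw [h3]
    ring

private lemma key : ∀ d : ℕ, ∀ f : Polynomial ℤ, f.natDegree ≤ d →
    (∀ i ≤ d, f.coeff i = f.coeff (d - i)) →
    ∃! γ : ℕ → ℤ, (∀ i, d / 2 < i → γ i = 0) ∧
      f = ∑ i ∈ Finset.range (d / 2 + 1), C (γ i) * X ^ i * (1 + X) ^ (d - 2 * i) := by
  intro d
  induction d using Nat.strong_induction_on with
  | _ d IH =>
  rcases d with _ | _ | e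
  · -- d = 0
    intro f hdeg hsym
    have hf : f = C (f.coeff 0) := Polynomial.eq_C_of_natDegree_le_zero hdeg
    refine ⟨fun i => if i = 0 then f.coeff 0 else 0, ⟨?_, ?_⟩, ?_⟩
    · intro i hi
      have : i ≠ 0 := by omega
      simp [this]
    · rw [Finset.sum_range_one]
      simpa using hf
    · rintro γ ⟨hv, heq⟩
      have h0 : f.coeff 0 = γ 0 := by
        rw [heq, Polynomial.coeff_zero_eq_eval_zero, eval_zero_sum]
      funext i
      cases i with
      | zero => simp [← h0]
      | succ n => simp [hv (n + 1) (by omega)]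
  · -- d = 1
    intro f hdeg hsym
    have h01 : f.coeff 0 = f.coeff 1 := hsym 0 (by omega)
    have hf : f = C (f.coeff 0) * (1 + X) := by
      have h2 := Polynomial.eq_X_add_C_of_natDegree_le_one hdeg
      conv_lhs => rw [h2]
      rw [← h01]
      ring
    refine ⟨fun i => if i = 0 then f.coeff 0 else 0, ⟨?_, ?_⟩, ?_⟩
    · intro i hi
      have : i ≠ 0 := by omega
      simp [this]
    · rw [Finset.sum_range_one]
      simpa using hf
    · rintro γ ⟨hv, heq⟩
      have h0 : f.coeff 0 = γ 0 := by
        rw [heq, Polynomial.coeff_zero_eq_eval_zero, eval_zero_sum]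
      funext i
      cases i with
      | zero => simp [← h0]
      | succ n => simp [hv (n + 1) (by omega)]
  · -- d = e + 2
    intro f hdeg hsym
    set c := f.coeff 0 with hc
    set h : Polynomial ℤ := f - C c * (1 + X) ^ (e + 2) with hh
    have hhcoeff : ∀ j, h.coeff j = f.coeff j - c * (e + 2).choose j := by
      intro j
      simp [hh, Polynomial.coeff_one_add_X_pow]
    have hhsym : ∀ j ≤ e + 2, h.coeff j = h.coeff (e + 2 - j) := by
      intro j hj
      rw [hhcoeff, hhcoeff, hsym j hj, Nat.choose_symm hj]
    have hh0 : h.coeff 0 = 0 := by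
      rw [hhcoeff]; simp [hc]
    have hhd : h.coeff (e + 2) = 0 := by
      rw [hhcoeff]
      have := hsym 0 (by omega)
      simp at this
      simp [hc, ← this]
    have hpowdeg : ((1 + X : Polynomial ℤ) ^ (e + 2)).natDegree ≤ e + 2 := by
      compute_degree!
    have hhdeg : h.natDegree ≤ e + 2 := by
      refine le_trans (Polynomial.natDegree_sub_le _ _) (max_le hdeg ?_)
      refine le_trans (Polynomial.natDegree_mul_le) ?_
      have h1X : (1 + X : Polynomial ℤ).natDegree ≤ 1 := by compute_degree
      simpa using hpowdeg
    set g : Polynomial ℤ := h.divX with hg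
    have hXg : h = X * g := by
      have := Polynomial.X_mul_divX_add h
      rw [hh0] at this
      simpa [hg] using this.symm
    have hgcoeff : ∀ j, g.coeff j = h.coeff (j + 1) := by
      intro j; simp [hg, Polynomial.coeff_divX]
    have hgdeg : g.natDegree ≤ e := by
      rw [Polynomial.natDegree_le_iff_coeff_eq_zero]
      intro m hm
      rw [hgcoeff]
      rcases Nat.lt_or_ge (e + 2) (m + 1) with hlt | hge
      · exact Polynomial.coeff_eq_zero_of_natDegree_lt (lt_of_le_of_lt hhdeg hlt)
      · have : m + 1 = e + 2 := by omega
        rw [this]; exact hhd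
    have hgsym : ∀ i ≤ e, g.coeff i = g.coeff (e - i) := by
      intro i hi
      rw [hgcoeff, hgcoeff]
      have h1 : e - i + 1 = e + 2 - (i + 1) := by omega
      rw [h1]
      exact hhsym (i + 1) (by omega)
    obtain ⟨γ', ⟨hv', heq'⟩, huniq'⟩ := IH e (by omega) g hgdeg hgsym
    set Γ : ℕ → ℤ := fun i => if i = 0 then c else γ' (i - 1) with hΓ
    have hΓ0 : Γ 0 = c := by simp [hΓ]
    have hΓs : ∀ i, Γ (i + 1) = γ' i := by intro i; simp [hΓ]
    have hfeq : f = ∑ i ∈ Finset.range ((e + 2) / 2 + 1),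
        C (Γ i) * X ^ i * (1 + X) ^ (e + 2 - 2 * i) := by
      rw [sum_step, hΓ0]
      have hsum : ∑ i ∈ Finset.range (e / 2 + 1), C (Γ (i + 1)) * X ^ i * (1 + X) ^ (e - 2 * i)
          = g := by
        rw [heq']
        exact Finset.sum_congr rfl fun i _ => by rw [hΓs]
      rw [hsum]
      have : f - C c * (1 + X) ^ (e + 2) = X * g := by rw [← hh, hXg]
      linear_combination this
    refine ⟨Γ, ⟨?_, hfeq⟩, ?_⟩
    · intro i hi
      have hi0 : i ≠ 0 := by omega
      rw [hΓ]
      simp only [hi0, if_false]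
      exact hv' (i - 1) (by omega)
    · rintro γ ⟨hv, heq⟩
      have h0 : γ 0 = c := by
        rw [hc, heq, Polynomial.coeff_zero_eq_eval_zero, eval_zero_sum]
      have hXeq : X * ∑ i ∈ Finset.range (e / 2 + 1),
          C (γ (i + 1)) * X ^ i * (1 + X) ^ (e - 2 * i) = X * g := by
        have h1 : f = C c * (1 + X) ^ (e + 2)
            + X * ∑ i ∈ Finset.range (e / 2 + 1),
              C (γ (i + 1)) * X ^ i * (1 + X) ^ (e - 2 * i) := by
          rw [heq, sum_step, h0]
        have h2 : f = C c * (1 + X) ^ (e + 2) + X * g := by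
          have : f - C c * (1 + X) ^ (e + 2) = X * g := by rw [← hh, hXg]
          linear_combination this
        linear_combination h1.symm.trans h2
      have hSg : ∑ i ∈ Finset.range (e / 2 + 1),
          C (γ (i + 1)) * X ^ i * (1 + X) ^ (e - 2 * i) = g :=
        mul_left_cancel₀ Polynomial.X_ne_zero hXeq
      have hγs : (fun i => γ (i + 1)) = γ' := by
        apply huniq'
        exact ⟨fun i hi => hv (i + 1) (by omega), hSg.symm⟩
      funext i
      cases i with
      | zero => rw [h0, hΓ0]
      | succ n => rw [hΓs, ← congrFun hγs n]

theorem stmt4 (f : Polynomial ℤ) (d : ℕ)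
    (hdeg : f.natDegree ≤ d)
    (hsym : ∀ i ≤ d, f.coeff i = f.coeff (d - i)) :
    ∃! γ : ℕ → ℤ, (∀ i, d / 2 < i → γ i = 0) ∧
      f = ∑ i ∈ Finset.range (d / 2 + 1), C (γ i) * X ^ i * (1 + X) ^ (d - 2 * i) := by
  exact key d f hdeg hsym
end

section
/- For every n ≥ 3, the polynomial P_n defined by the recursion P_3 = 1, P_n(t) = P_{n-1}(t)·(1+t) + t·∑_{i=3}^{n-2} C(n-2, i-1)·P_i(t)·P_{n+1-i}(t) is γ-positive: writing P_n(t) = ∑_{i=0}^{⌊(n-3)/2⌋} γ_{n,i} t^i (1+t)^{n-3-2i}, all γ_{n,i} are nonnegative. -/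
open Polynomial Finset

noncomputable def G : ℕ → Polynomial ℕ
  | 0 => 0
  | 1 => 0
  | 2 => 0
  | 3 => 1
  | (n+4) => G (n+3) + X * ∑ i ∈ (Finset.Icc 3 (n+2)).attach,
      (((n+2).choose (i.1-1) : Polynomial ℕ)) * G i.1 * G (n+5-i.1)
termination_by n => n
decreasing_by
  all_goals first
    | omega
    | (have := Finset.mem_Icc.mp i.2; omega)

lemma G_succ (n : ℕ) : G (n+4) = G (n+3) + X * ∑ i ∈ Finset.Icc 3 (n+2),
    ((n+2).choose (i-1) : Polynomial ℕ) * G i * G (n+5-i) := by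
  rw [G]
  congr 1
  exact congrArg (X * ·) (Finset.sum_attach _ fun i => ((n+2).choose (i-1) : Polynomial ℕ) * G i * G (n+5-i))

lemma G_coeff_eq_zero : ∀ n i, n < 2*i+3 → (G n).coeff i = 0 := by
  intro n
  induction n using Nat.strong_induction_on with
  | _ n IH =>
    match n with
    | 0 => intro i _; simp [G]
    | 1 => intro i _; simp [G]
    | 2 => intro i _; simp [G]
    | 3 =>
      intro i hi
      have : i ≠ 0 := by omega
      simp [G, coeff_one, this]
    | (m+4) =>
      intro i hi
      have hi1 : 1 ≤ i := by omega
      obtain ⟨j, rfl⟩ : ∃ j, i = j + 1 := ⟨i - 1, by omega⟩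
      rw [G_succ, coeff_add, coeff_X_mul, finset_sum_coeff]
      have h1 : (G (m+3)).coeff (j+1) = 0 := IH (m+3) (by omega) _ (by omega)
      rw [h1, zero_add]
      apply Finset.sum_eq_zero
      intro p hp
      obtain ⟨hp3, hp2⟩ := Finset.mem_Icc.mp hp
      rw [show ((((m+2).choose (p-1)) : Polynomial ℕ)) = C ((m+2).choose (p-1)) from (C_eq_natCast _).symm,
        mul_assoc, coeff_C_mul, coeff_mul]
      rw [Finset.sum_eq_zero, mul_zero]
      intro ab hab
      rw [Finset.HasAntidiagonal.mem_antidiagonal] at hab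
      by_cases ha : p < 2*ab.1+3
      · rw [IH p (by omega) _ ha, zero_mul]
      · have hb : m+5-p < 2*ab.2+3 := by omega
        rw [IH (m+5-p) (by omega) _ hb, mul_zero]

lemma indep (N : ℕ) (δ : ℕ → ℤ) (e : ℕ → ℕ)
    (h : ∑ i ∈ Finset.range N, C (δ i) * X ^ i * (1 + X) ^ (e i) = 0) :
    ∀ k, k < N → δ k = 0 := by
  intro k
  induction k using Nat.strong_induction_on with
  | _ k IH =>
    intro hk
    have h2 := congrArg (fun p => coeff p k) h
    simp only [finset_sum_coeff, coeff_zero] at h2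
    have h3 : ∀ i ∈ Finset.range N,
        coeff (C (δ i) * X ^ i * (1 + X) ^ (e i)) k
          = if i ≤ k then δ i * ((e i).choose (k - i)) else 0 := by
      intro i _
      rw [mul_right_comm, coeff_mul_X_pow']
      split_ifs with hik
      · rw [coeff_C_mul, add_comm (1 : Polynomial ℤ) X, coeff_X_add_one_pow]
      · rfl
    rw [Finset.sum_congr rfl h3, Finset.sum_eq_single k] at h2
    · simpa using h2
    · intro b hb hbk
      rcases lt_or_gt_of_ne hbk with hlt | hgt
      · rw [IH b hlt (lt_of_lt_of_le hlt hk.le), if_pos hlt.le, zero_mul]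
      · rw [if_neg (by omega)]
    · intro hkN
      exact absurd (Finset.mem_range.mpr hk) hkN

noncomputable abbrev KK := FractionRing (Polynomial ℤ)
noncomputable def ι : Polynomial ℤ →+* KK := algebraMap _ _
noncomputable def uu : KK := ι X / (ι (1+X))^2

lemma ι_inj : Function.Injective ι := IsFractionRing.injective _ _

lemma hv : ι (1+X) ≠ 0 := by
  rw [map_ne_zero_iff ι ι_inj]
  intro h
  have := congrArg (fun p => coeff p 0) h
  simp at this

lemma hXuv : ι X = uu * (ι (1+X))^2 := by
  rw [uu, div_mul_cancel₀ _ (pow_ne_zero 2 hv)]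

lemma hcC (c : ℤ) : ι (C c) = algebraMap ℤ KK c := by
  simp [C_eq_intCast, map_intCast, eq_intCast]

lemma termB (c : ℤ) (i e : ℕ) :
    ι (C c * X^i * (1+X)^e) = (ι (1+X))^(2*i+e) * aeval uu (C c * X^i) := by
  rw [map_mul, map_mul, map_pow, map_pow, hXuv, map_mul, aeval_C, map_pow, aeval_X, hcC,
    pow_add, pow_mul]
  ring

lemma claimB (n : ℕ) (c : ℕ → ℤ) :
    ι (∑ i ∈ Finset.range ((n-3)/2+1), C (c i) * X^i * (1+X)^(n-3-2*i))
      = (ι (1+X))^(n-3) * aeval uu (∑ i ∈ Finset.range ((n-3)/2+1), C (c i) * X^i) := by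
  rw [map_sum, map_sum, Finset.mul_sum]
  apply Finset.sum_congr rfl
  intro i hi
  have hi2 : 2*i ≤ n - 3 := by
    have := Finset.mem_range.mp hi; omega
  rw [termB, show 2*i + (n-3-2*i) = n-3 from by omega]

lemma claimA (P : ℕ → Polynomial ℤ)
    (h3 : P 3 = 1)
    (hrec : ∀ n, 3 < n → P n = P (n-1) * (1 + X) +
      X * ∑ i ∈ Finset.Icc 3 (n-2), ((n-2).choose (i-1) : Polynomial ℤ) * P i * P (n+1-i)) :
    ∀ n, 3 ≤ n → ι (P n) = (ι (1+X))^(n-3) * aeval uu ((G n).map (Nat.castRingHom ℤ)) := by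
  intro n
  induction n using Nat.strong_induction_on with
  | _ n IH =>
    intro hn
    rcases eq_or_lt_of_le hn with h3n | h4n
    · rw [← h3n, h3]
      norm_num [G]
    · obtain ⟨m, rfl⟩ : ∃ m, n = m + 4 := ⟨n - 4, by omega⟩
      have hr := hrec (m+4) (by omega)
      have h45 : m+4+1 = m+5 := by omega
      have hd1 : m+4-1 = m+3 := by omega
      have hd2 : m+4-2 = m+2 := by omega
      have hd3 : m+4-3 = m+1 := by omega
      simp only [h45, hd1, hd2] at hr
      have e := congrArg ι hr
      rw [map_add, map_mul, map_mul, map_sum] at e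
      simp only [map_mul, map_natCast] at e
      have hIH : ∀ p ∈ Finset.Icc 3 (m+2),
          (((m+2).choose (p-1) : KK)) * ι (P p) * ι (P (m+5-p))
            = ((m+2).choose (p-1) : KK)
              * ((ι (1+X))^(p-3) * aeval uu ((G p).map (Nat.castRingHom ℤ)))
              * ((ι (1+X))^(m+2-p) * aeval uu ((G (m+5-p)).map (Nat.castRingHom ℤ))) := by
        intro p hp
        obtain ⟨hp3, hp2⟩ := Finset.mem_Icc.mp hp
        rw [IH p (by omega) (by omega), IH (m+5-p) (by omega) (by omega),
          show m+5-p-3 = m+2-p from by omega, show p-3 = p-3 from rfl]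
      rw [Finset.sum_congr rfl hIH] at e
      have hG : (G (m+4)).map (Nat.castRingHom ℤ)
          = (G (m+3)).map (Nat.castRingHom ℤ) + X * ∑ p ∈ Finset.Icc 3 (m+2),
            ((m+2).choose (p-1) : Polynomial ℤ) * (G p).map (Nat.castRingHom ℤ)
              * ((G (m+5-p)).map (Nat.castRingHom ℤ)) := by
        rw [G_succ, Polynomial.map_add, Polynomial.map_mul, Polynomial.map_X,
          Polynomial.map_sum]
        congr 1
        apply congrArg
        apply Finset.sum_congr rfl
        intro p _
        rw [Polynomial.map_mul, Polynomial.map_mul, Polynomial.map_natCast]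
      have hA : aeval uu ((G (m+4)).map (Nat.castRingHom ℤ))
          = aeval uu ((G (m+3)).map (Nat.castRingHom ℤ)) + uu * ∑ p ∈ Finset.Icc 3 (m+2),
            ((m+2).choose (p-1) : KK) * aeval uu ((G p).map (Nat.castRingHom ℤ))
              * aeval uu ((G (m+5-p)).map (Nat.castRingHom ℤ)) := by
        rw [hG]
        simp only [map_add, map_mul, map_natCast, aeval_X, map_sum]
      rw [hd3, hA, e, IH (m+3) (by omega) (by omega), show m+3-3 = m from by omega]
      rw [hXuv, mul_add, Finset.mul_sum, Finset.mul_sum]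
      congr 1
      · rw [pow_succ]; ring
      · rw [Finset.mul_sum]
        apply Finset.sum_congr rfl
        intro p hp
        obtain ⟨hp3, hp2⟩ := Finset.mem_Icc.mp hp
        rw [show m+1 = 2 + ((p-3) + (m+2-p)) from by omega, pow_add, pow_add]
        ring

theorem stmt6 (P : ℕ → Polynomial ℤ)
    (h3 : P 3 = 1)
    (hrec : ∀ n, 3 < n → P n = P (n-1) * (1 + X) +
      X * ∑ i ∈ Finset.Icc 3 (n-2), ((n-2).choose (i-1) : Polynomial ℤ) * P i * P (n+1-i)) :
    ∀ n, 3 ≤ n → ∀ γ : ℕ → ℤ,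
      (∀ i, (n - 3) / 2 < i → γ i = 0) →
      P n = ∑ i ∈ Finset.range ((n - 3) / 2 + 1),
          C (γ i) * X ^ i * (1 + X) ^ (n - 3 - 2 * i) →
      ∀ i, 0 ≤ γ i := by
  intro n hn γ hγ0 hexp
  have hdegN : ((G n).map (Nat.castRingHom ℤ)).natDegree ≤ (n-3)/2 := by
    rw [Polynomial.natDegree_le_iff_coeff_eq_zero]
    intro N hN
    rw [Polynomial.coeff_map, G_coeff_eq_zero n N (by omega)]
    simp
  have hGsum : (G n).map (Nat.castRingHom ℤ)
      = ∑ i ∈ Finset.range ((n-3)/2+1), C (((G n).coeff i : ℤ)) * X^i := by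
    conv_lhs => rw [Polynomial.as_sum_range' _ ((n-3)/2+1)
      (lt_of_le_of_lt hdegN (Nat.lt_succ_self _))]
    apply Finset.sum_congr rfl
    intro i _
    rw [← Polynomial.C_mul_X_pow_eq_monomial, Polynomial.coeff_map]
    norm_num
  have e1 : ι (P n) = ι (∑ i ∈ Finset.range ((n-3)/2+1),
      C (((G n).coeff i : ℤ)) * X^i * (1+X)^(n-3-2*i)) := by
    rw [claimA P h3 hrec n hn, hGsum, claimB]
  have e2 := congrArg ι hexp
  have e3 : (∑ i ∈ Finset.range ((n-3)/2+1), C (γ i) * X^i * (1+X)^(n-3-2*i))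
      = ∑ i ∈ Finset.range ((n-3)/2+1), C (((G n).coeff i : ℤ)) * X^i * (1+X)^(n-3-2*i) :=
    ι_inj (e2.symm.trans e1)
  have e4 : ∑ i ∈ Finset.range ((n-3)/2+1),
      C (γ i - ((G n).coeff i : ℤ)) * X^i * (1+X)^(n-3-2*i) = 0 := by
    have h0 := sub_eq_zero.mpr e3
    rw [← Finset.sum_sub_distrib] at h0
    rw [← h0]
    apply Finset.sum_congr rfl
    intro i _
    rw [map_sub]
    ring
  have e5 := indep _ _ _ e4
  intro i
  by_cases hiD : i < (n-3)/2+1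
  · have h6 := sub_eq_zero.mp (e5 i hiD)
    rw [h6]
    exact Int.natCast_nonneg _
  · rw [hγ0 i (by omega)]
end

section
/- A real-rooted palindromic polynomial with nonnegative coefficients is γ-positive: if f ∈ ℝ[t] is symmetric with center d/2, has nonnegative coefficients, and has only real roots, then in the unique expansion f(t) = ∑_{i=0}^{⌊d/2⌋} γ_i t^i (1+t)^{d-2i} all γ_i are nonnegative. -/
open Polynomial Finset

lemma key_inj : Set.InjOn (fun x : ℝ => x / (1+x)^2) (Set.Ioo 0 1) := by
  rintro x ⟨hx0, hx1⟩ y ⟨hy0, hy1⟩ h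
  simp only at h
  have h1 : (1+x)^2 ≠ 0 := by positivity
  have h2 : (1+y)^2 ≠ 0 := by positivity
  field_simp at h
  have hxy : (x - y) * (1 - x*y) = 0 := by linear_combination h
  rcases mul_eq_zero.mp hxy with h' | h'
  · linarith
  · nlinarith

lemma gamma_uniq (d : ℕ) (δ : ℕ → ℝ)
    (h : ∑ i ∈ Finset.range (d/2+1), C (δ i) * X ^ i * (1+X) ^ (d - 2*i) = 0) :
    ∀ i ∈ Finset.range (d/2+1), δ i = 0 := by
  set p : Polynomial ℝ := ∑ i ∈ Finset.range (d/2+1), C (δ i) * X ^ i with hp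
  have hroot : ∀ x ∈ Set.Ioo (0:ℝ) 1, p.IsRoot (x / (1+x)^2) := by
    intro x ⟨hx0, _⟩
    have h1x : (0:ℝ) < 1 + x := by linarith
    have heval : ((1:ℝ)+x)^d * p.eval (x / (1+x)^2) = 0 := by
      have := congrArg (Polynomial.eval x) h
      simp only [eval_finset_sum, eval_mul, eval_pow, eval_C, eval_X, eval_add, eval_one,
        eval_zero] at this
      rw [hp, eval_finset_sum, Finset.mul_sum]
      rw [← this]
      apply Finset.sum_congr rfl
      intro i hi
      have h2i : 2*i ≤ d := by
        rw [Finset.mem_range] at hi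
        omega
      simp only [eval_mul, eval_pow, eval_C, eval_X]
      rw [div_pow, pow_sub₀ (1+x) (ne_of_gt h1x) h2i]
      rw [pow_mul]
      field_simp
    have := mul_eq_zero.mp heval
    rcases this with h' | h'
    · exact absurd h' (by positivity)
    · exact h'
  have hpz : p = 0 := by
    apply Polynomial.eq_zero_of_infinite_isRoot
    apply Set.Infinite.mono (s := (fun x : ℝ => x / (1+x)^2) '' (Set.Ioo 0 1))
    · rintro s ⟨x, hx, rfl⟩; exact hroot x hx
    · exact Set.Infinite.image key_inj ((Set.Ioo_infinite (by norm_num : (0:ℝ) < 1)))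
  intro i hi
  have : p.coeff i = δ i := by
    rw [hp, Polynomial.finset_sum_coeff]
    rw [Finset.sum_eq_single i]
    · simp
    · intro j _ hj; simp [coeff_X_pow, hj, Ne.symm hj]
    · intro h'; exact absurd hi h'
  rw [hpz] at this
  simpa using this.symm


lemma lemB (m : ℕ) (γ : ℕ → ℝ) (hv : ∀ i, m/2 < i → γ i = 0) :
    (1+X) * ∑ i ∈ Finset.range (m/2+1), C (γ i) * X ^ i * (1+X) ^ (m - 2*i)
    = ∑ i ∈ Finset.range ((m+1)/2+1), C (γ i) * X ^ i * (1+X) ^ (m+1 - 2*i) := by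
  rw [Finset.mul_sum]
  have h1 : ∑ i ∈ Finset.range (m/2+1), (1+X) * (C (γ i) * X ^ i * (1+X) ^ (m - 2*i))
      = ∑ i ∈ Finset.range (m/2+1), C (γ i) * X ^ i * (1+X) ^ (m+1 - 2*i) := by
    apply Finset.sum_congr rfl
    intro i hi
    rw [Finset.mem_range] at hi
    rw [show m+1 - 2*i = (m - 2*i) + 1 from by omega, pow_succ]
    ring
  rw [h1]
  apply Finset.sum_subset (Finset.range_subset_range.mpr (by omega))
  intro i hi hni
  rw [Finset.mem_range] at hni
  rw [hv i (by omega)]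
  simp

lemma lemC (m : ℕ) (γ : ℕ → ℝ) :
    X * ∑ i ∈ Finset.range (m/2+1), C (γ i) * X ^ i * (1+X) ^ (m - 2*i)
    = ∑ i ∈ Finset.range (m/2+2), C (if i = 0 then 0 else γ (i-1)) * X ^ i * (1+X) ^ (m+2 - 2*i) := by
  rw [Finset.sum_range_succ' (fun i => C (if i = 0 then 0 else γ (i-1)) * X ^ i * (1+X) ^ (m+2 - 2*i)) (m/2+1)]
  have h0 : C (if (0:ℕ) = 0 then (0:ℝ) else γ (0-1)) * X ^ 0 * (1+X) ^ (m+2 - 2*0) = 0 := by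
    simp
  rw [h0, add_zero, Finset.mul_sum]
  apply Finset.sum_congr rfl
  intro i hi
  simp only [Nat.succ_ne_zero, if_false, Nat.add_sub_cancel]
  rw [show m+2 - 2*(i+1) = m - 2*i from by omega]
  ring

lemma lemA : ∀ d : ℕ, ∀ f : Polynomial ℝ, f.natDegree ≤ d → Polynomial.reflect d f = f →
    f.Splits → 0 ≤ f.leadingCoeff → (∀ x : ℝ, f.eval x = 0 → x ≤ 0) →
    ∃ g : ℕ → ℝ, (∀ i, 0 ≤ g i) ∧ (∀ i, d/2 < i → g i = 0) ∧
      f = ∑ i ∈ Finset.range (d/2+1), C (g i) * X ^ i * (1+X) ^ (d - 2*i) := by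
  intro d
  induction d using Nat.strong_induction_on with
  | _ d IH =>
  intro f hdeg hrefl hsplit hlc hroots
  by_cases hf0 : f = 0
  · exact ⟨0, fun _ => le_refl 0, fun _ _ => rfl, by simp [hf0]⟩
  -- f ≠ 0
  have hsym : ∀ i, i ≤ d → f.coeff i = f.coeff (d - i) := by
    intro i hi
    conv_lhs => rw [← hrefl]
    rw [coeff_reflect, revAt_le hi]
  by_cases hdlt : f.natDegree < d
  · -- X divides f
    have hcd : f.coeff d = 0 := coeff_eq_zero_of_natDegree_lt hdlt
    have hc0 : f.coeff 0 = 0 := by rw [hsym 0 (Nat.zero_le d)]; simpa using hcd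
    have hd2 : 2 ≤ d := by
      rcases Nat.lt_or_ge d 2 with h | h
      · exfalso
        interval_cases d
        · omega
        · have hnd : f.natDegree = 0 := by omega
          have := Polynomial.eq_C_of_natDegree_le_zero (le_of_eq hnd)
          rw [hc0] at this
          exact hf0 (by simpa using this)
      · exact h
    obtain ⟨h, hfh⟩ : X ∣ f := Polynomial.X_dvd_iff.mpr hc0
    have hh0 : h ≠ 0 := by rintro rfl; exact hf0 (by simpa using hfh)
    have hndf : f.natDegree = 1 + h.natDegree := by
      rw [hfh, Polynomial.natDegree_mul Polynomial.X_ne_zero hh0, Polynomial.natDegree_X]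
    have hdegh : h.natDegree ≤ d - 2 := by omega
    have hreflh : Polynomial.reflect (d-2) h = h := by
      have e1 : Polynomial.reflect d (X * h) = Polynomial.reflect 2 X * Polynomial.reflect (d-2) h := by
        have := Polynomial.reflect_mul X h (F := 2) (G := d-2)
          (by rw [Polynomial.natDegree_X]; omega) hdegh
        rwa [show 2 + (d-2) = d from by omega] at this
      have e2 : Polynomial.reflect 2 (X : Polynomial ℝ) = X := by
        have : (X : Polynomial ℝ) = C 1 * X ^ 1 := by simp
        rw [this, Polynomial.reflect_C_mul_X_pow]
        simp [revAt_le]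
      rw [e2] at e1
      have : X * h = X * Polynomial.reflect (d-2) h := by
        conv_lhs => rw [← hfh, ← hrefl, hfh, e1]
      exact (mul_left_cancel₀ Polynomial.X_ne_zero this).symm
    have hsplith : h.Splits := by
      exact hsplit.of_dvd hf0 (by rw [hfh]; exact dvd_mul_left _ _)
    have hlch : 0 ≤ h.leadingCoeff := by
      have : f.leadingCoeff = h.leadingCoeff := by
        rw [hfh, Polynomial.leadingCoeff_mul, Polynomial.leadingCoeff_X, one_mul]
      rwa [this] at hlc
    have hrootsh : ∀ x : ℝ, h.eval x = 0 → x ≤ 0 := by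
      intro x hx
      apply hroots
      rw [hfh, Polynomial.eval_mul, hx, mul_zero]
    obtain ⟨g, hg0, hgv, hge⟩ := IH (d-2) (by omega) h hdegh hreflh hsplith hlch hrootsh
    refine ⟨fun i => if i = 0 then 0 else g (i-1), ?_, ?_, ?_⟩
    · intro i; dsimp only; split
      · exact le_refl 0
      · exact hg0 _
    · intro i hi; dsimp only
      rw [if_neg (by omega)]
      exact hgv _ (by omega)
    · rw [hfh, hge, lemC (d-2) g]
      rw [show (d-2)/2+2 = d/2+1 from by omega, show d-2+2 = d from by omega]
  · -- natDegree f = d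
    have hnd : f.natDegree = d := by omega
    have hlcpos : 0 < f.leadingCoeff :=
      lt_of_le_of_ne hlc (Ne.symm (Polynomial.leadingCoeff_ne_zero.mpr hf0))
    have hc0pos : f.coeff 0 ≠ 0 := by
      rw [hsym 0 (Nat.zero_le d)]
      simpa [← hnd, Polynomial.coeff_natDegree] using ne_of_gt hlcpos
    by_cases hd0 : d = 0
    · subst hd0
      refine ⟨fun i => if i = 0 then f.coeff 0 else 0, ?_, ?_, ?_⟩
      · intro i; dsimp only; split
        · have : f.leadingCoeff = f.coeff 0 := by rw [← hnd]; rfl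
          rw [← this]; exact hlc
        · exact le_refl 0
      · intro i hi; dsimp only; rw [if_neg (show ¬ i = 0 by omega)]
      · simpa [Finset.sum_range_succ] using Polynomial.eq_C_of_natDegree_le_zero (le_of_eq hnd)
    · -- d ≥ 1
      have hdegne : f.degree ≠ 0 := by
        rw [Polynomial.degree_eq_natDegree hf0, hnd]
        exact_mod_cast hd0
      obtain ⟨r, hr'⟩ := hsplit.exists_eval_eq_zero hdegne
      have hr : f.eval r = 0 := hr'
      have hrne0 : r ≠ 0 := by
        intro h0
        rw [h0, ← Polynomial.coeff_zero_eq_eval_zero] at hr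
        exact hc0pos hr
      have hrneg : r < 0 := lt_of_le_of_ne (hroots r hr) hrne0
      by_cases hm1 : f.eval (-1) = 0
      · -- (X+1) divides f, reduce d by 1
        obtain ⟨h, hfh⟩ : (X - C (-1:ℝ)) ∣ f := Polynomial.dvd_iff_isRoot.mpr hm1
        have hX1 : (X - C (-1:ℝ)) = X + 1 := by simp [sub_eq_add_neg]
        rw [hX1] at hfh
        have hh0 : h ≠ 0 := by rintro rfl; exact hf0 (by simpa using hfh)
        have hm1C : (X + 1 : Polynomial ℝ) = X + C 1 := by rw [Polynomial.C_1]
        have hX1ne : (X + 1 : Polynomial ℝ) ≠ 0 := by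
          rw [hm1C]; exact Polynomial.X_add_C_ne_zero 1
        have hndh : f.natDegree = 1 + h.natDegree := by
          rw [hfh, Polynomial.natDegree_mul hX1ne hh0]
          congr 1
          rw [hm1C]; exact Polynomial.natDegree_X_add_C (1:ℝ)
        have hdegh : h.natDegree ≤ d - 1 := by omega
        have hreflh : Polynomial.reflect (d-1) h = h := by
          have e1 : Polynomial.reflect d ((X+1) * h)
              = Polynomial.reflect 1 (X+1) * Polynomial.reflect (d-1) h := by
            have := Polynomial.reflect_mul (X+1) h (F := 1) (G := d-1)
              (by rw [hm1C, Polynomial.natDegree_X_add_C]) hdegh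
            rwa [show 1 + (d-1) = d from by omega] at this
          have e2 : Polynomial.reflect 1 (X + 1 : Polynomial ℝ) = X + 1 := by
            have h1 : (X + 1 : Polynomial ℝ) = C 1 * X ^ 1 + C 1 * X ^ 0 := by simp
            rw [h1, Polynomial.reflect_add, Polynomial.reflect_C_mul_X_pow,
              Polynomial.reflect_C_mul_X_pow]
            simp [revAt_le]
            ring
          rw [e2] at e1
          have : (X+1) * h = (X+1) * Polynomial.reflect (d-1) h := by
            conv_lhs => rw [← hfh, ← hrefl, hfh, e1]
          exact (mul_left_cancel₀ hX1ne this).symm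
        have hsplith : h.Splits := by
          exact hsplit.of_dvd hf0 (by rw [hfh]; exact dvd_mul_left _ _)
        have hlch : 0 ≤ h.leadingCoeff := by
          have : f.leadingCoeff = h.leadingCoeff := by
            rw [hfh, Polynomial.leadingCoeff_mul]
            have : (X + 1 : Polynomial ℝ).leadingCoeff = 1 := by
              rw [hm1C]; exact Polynomial.leadingCoeff_X_add_C (1:ℝ)
            rw [this, one_mul]
          rwa [this] at hlc
        have hrootsh : ∀ x : ℝ, h.eval x = 0 → x ≤ 0 := by
          intro x hx
          apply hroots
          rw [hfh, Polynomial.eval_mul, hx, mul_zero]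
        obtain ⟨g, hg0, hgv, hge⟩ := IH (d-1) (by omega) h hdegh hreflh hsplith hlch hrootsh
        refine ⟨g, hg0, ?_, ?_⟩
        · intro i hi; exact hgv _ (by omega)
        · rw [hfh, hge, show (X+1 : Polynomial ℝ) = 1 + X from by ring,
            lemB (d-1) g hgv, show d-1+1 = d from by omega]
      · -- r ≠ -1 : pair r with r⁻¹
        have hrne1 : r ≠ -1 := fun hc => hm1 (hc ▸ hr)
        have hrinv : f.eval r⁻¹ = 0 := by
          haveI : Invertible r := invertibleOfNonzero hrne0
          have hiff := Polynomial.eval₂_reflect_eq_zero_iff (RingHom.id ℝ) r d f hdeg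
          rw [hrefl] at hiff
          have h2 : Polynomial.eval₂ (RingHom.id ℝ) (⅟r) f = 0 := hiff.mpr hr
          rw [invOf_eq_inv] at h2
          exact h2
        have hrinvne : r⁻¹ ≠ r := by
          intro hc
          have h2 : r * r = 1 := by
            have := mul_inv_cancel₀ hrne0
            rwa [hc] at this
          have h3 : (r - 1) * (r + 1) = 0 := by nlinarith
          rcases mul_eq_zero.mp h3 with h' | h'
          · nlinarith
          · exact hrne1 (by linarith)
        obtain ⟨h1, hfh1⟩ : (X - C r) ∣ f := Polynomial.dvd_iff_isRoot.mpr hr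
        have hh1root : h1.eval r⁻¹ = 0 := by
          have := hrinv
          rw [hfh1, Polynomial.eval_mul] at this
          simp only [Polynomial.eval_sub, Polynomial.eval_X, Polynomial.eval_C] at this
          rcases mul_eq_zero.mp this with h' | h'
          · exact absurd (by linarith [sub_eq_zero.mp h'] : r⁻¹ = r) hrinvne
          · exact h'
        obtain ⟨h, hh1h⟩ : (X - C r⁻¹) ∣ h1 := Polynomial.dvd_iff_isRoot.mpr hh1root
        set a : ℝ := -(r + r⁻¹) with ha
        have hrr : r * r⁻¹ = 1 := mul_inv_cancel₀ hrne0
        have ha2 : 2 ≤ a := by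
          rw [ha]
          nlinarith [sq_nonneg (r+1), hrr]
        have hq : (X - C r) * (X - C r⁻¹) = X^2 + C a * X + 1 := by
          have hCrr : (C r : Polynomial ℝ) * C r⁻¹ = 1 := by
            rw [← Polynomial.C_mul, hrr, Polynomial.C_1]
          have hCa : (C a : Polynomial ℝ) = -(C r + C r⁻¹) := by
            rw [ha]; simp
          calc (X - C r) * (X - C r⁻¹)
              = X^2 - (C r + C r⁻¹) * X + C r * C r⁻¹ := by ring
            _ = X^2 + C a * X + 1 := by rw [hCrr, hCa]; ring
        have hfqh : f = (X^2 + C a * X + 1) * h := by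
          rw [← hq, hfh1, hh1h]; ring
        have hqne : (X^2 + C a * X + 1 : Polynomial ℝ) ≠ 0 := by
          rw [← hq]
          exact mul_ne_zero (Polynomial.X_sub_C_ne_zero r) (Polynomial.X_sub_C_ne_zero r⁻¹)
        have hndq : (X^2 + C a * X + 1 : Polynomial ℝ).natDegree = 2 := by
          rw [← hq, Polynomial.natDegree_mul (Polynomial.X_sub_C_ne_zero r)
            (Polynomial.X_sub_C_ne_zero r⁻¹), Polynomial.natDegree_X_sub_C,
            Polynomial.natDegree_X_sub_C]
        have hh0 : h ≠ 0 := by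
          rintro rfl
          rw [mul_zero] at hfqh
          exact hf0 hfqh
        have hndfh : f.natDegree = 2 + h.natDegree := by
          rw [hfqh, Polynomial.natDegree_mul hqne hh0, hndq]
        have hd2 : 2 ≤ d := by omega
        have hdegh : h.natDegree ≤ d - 2 := by omega
        have hreflq : Polynomial.reflect 2 (X^2 + C a * X + 1 : Polynomial ℝ) = X^2 + C a * X + 1 := by
          have h1 : (X^2 + C a * X + 1 : Polynomial ℝ) = C 1 * X ^ 2 + C a * X ^ 1 + C 1 * X ^ 0 := by
            rw [Polynomial.C_1]; ring
          rw [h1, Polynomial.reflect_add, Polynomial.reflect_add,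
            Polynomial.reflect_C_mul_X_pow, Polynomial.reflect_C_mul_X_pow,
            Polynomial.reflect_C_mul_X_pow]
          simp [revAt_le]
          ring
        have hreflh : Polynomial.reflect (d-2) h = h := by
          have e1 : Polynomial.reflect d ((X^2 + C a * X + 1 : Polynomial ℝ) * h)
              = Polynomial.reflect 2 (X^2 + C a * X + 1 : Polynomial ℝ) * Polynomial.reflect (d-2) h := by
            have := Polynomial.reflect_mul (X^2 + C a * X + 1 : Polynomial ℝ) h (F := 2) (G := d-2) (le_of_eq hndq) hdegh
            rwa [show 2 + (d-2) = d from by omega] at this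
          rw [hreflq] at e1
          have : (X^2 + C a * X + 1 : Polynomial ℝ) * h = (X^2 + C a * X + 1 : Polynomial ℝ) * Polynomial.reflect (d-2) h := by
            conv_lhs => rw [← hfqh, ← hrefl, hfqh, e1]
          exact (mul_left_cancel₀ hqne this).symm
        have hsplith : h.Splits := by
          exact hsplit.of_dvd hf0 (by rw [hfqh]; exact dvd_mul_left _ _)
        have hlch : 0 ≤ h.leadingCoeff := by
          have hlcq : ((X^2 + C a * X + 1 : Polynomial ℝ)).leadingCoeff = 1 := by
            rw [← hq, Polynomial.leadingCoeff_mul]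
            rw [Polynomial.leadingCoeff_X_sub_C, Polynomial.leadingCoeff_X_sub_C]
            norm_num
          have : f.leadingCoeff = h.leadingCoeff := by
            rw [hfqh, Polynomial.leadingCoeff_mul, hlcq, one_mul]
          rwa [this] at hlc
        have hrootsh : ∀ x : ℝ, h.eval x = 0 → x ≤ 0 := by
          intro x hx
          apply hroots
          rw [hfqh, Polynomial.eval_mul, hx, mul_zero]
        obtain ⟨g, hg0, hgv, hge⟩ := IH (d-2) (by omega) h hdegh hreflh hsplith hlch hrootsh
        refine ⟨fun i => g i + (a-2) * (if i = 0 then 0 else g (i-1)), ?_, ?_, ?_⟩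
        · intro i; dsimp only
          have h1 : (0:ℝ) ≤ (a-2) * (if i = 0 then 0 else g (i-1)) := by
            apply mul_nonneg (by linarith)
            split
            · exact le_refl 0
            · exact hg0 _
          linarith [hg0 i]
        · intro i hi; dsimp only
          rw [hgv i (by omega), if_neg (by omega), hgv (i-1) (by omega)]
          ring
        · have hsplit2 : (X^2 + C a * X + 1 : Polynomial ℝ) = (1+X)^2 + C (a-2) * X := by
            have : (C (a-2) : Polynomial ℝ) = C a - 2 := by
              rw [Polynomial.C_sub, map_ofNat]
            rw [this]; ring
          rw [hfqh, hsplit2, add_mul, hge]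
          -- first part: (1+X)^2 * sum
          have hB1 : (1+X)^2 * ∑ i ∈ Finset.range ((d-2)/2+1), C (g i) * X ^ i * (1+X) ^ (d-2 - 2*i)
              = ∑ i ∈ Finset.range (d/2+1), C (g i) * X ^ i * (1+X) ^ (d - 2*i) := by
            rw [sq, mul_assoc, lemB (d-2) g hgv]
            have hgv1 : ∀ i, (d-2+1)/2 < i → g i = 0 := fun i hi => hgv i (by omega)
            rw [lemB (d-2+1) g hgv1]
            rw [show d-2+1+1 = d from by omega]
          have hC1 : C (a-2) * X * ∑ i ∈ Finset.range ((d-2)/2+1), C (g i) * X ^ i * (1+X) ^ (d-2 - 2*i)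
              = ∑ i ∈ Finset.range (d/2+1), C ((a-2) * (if i = 0 then 0 else g (i-1))) * X ^ i * (1+X) ^ (d - 2*i) := by
            rw [mul_assoc, lemC (d-2) g]
            rw [show (d-2)/2+2 = d/2+1 from by omega, show d-2+2 = d from by omega]
            rw [Finset.mul_sum]
            apply Finset.sum_congr rfl
            intro i hi
            rw [← mul_assoc, ← mul_assoc, ← Polynomial.C_mul]
          rw [hB1, hC1, ← Finset.sum_add_distrib]
          apply Finset.sum_congr rfl
          intro i hi
          dsimp only
          rw [Polynomial.C_add]
          ring


theorem stmt8 (f : Polynomial ℝ) (d : ℕ)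
    (hdeg : f.natDegree ≤ d)
    (hsym : ∀ i ≤ d, f.coeff i = f.coeff (d - i))
    (hnonneg : ∀ i, 0 ≤ f.coeff i)
    (hreal : f.Splits)
    (γ : ℕ → ℝ)
    (hγ0 : ∀ i, d / 2 < i → γ i = 0)
    (hγ : f = ∑ i ∈ Finset.range (d / 2 + 1), C (γ i) * X ^ i * (1 + X) ^ (d - 2 * i)) :
    ∀ i, 0 ≤ γ i := by
  by_cases hf0 : f = 0
  · rw [hf0] at hγ
    have huq := gamma_uniq d γ hγ.symm
    intro i
    by_cases hi : i < d/2+1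
    · rw [huq i (Finset.mem_range.mpr hi)]
    · rw [hγ0 i (by omega)]
  · have hrefl : Polynomial.reflect d f = f := by
      ext i
      rw [Polynomial.coeff_reflect]
      by_cases hi : i ≤ d
      · rw [Polynomial.revAt_le hi]
        exact (hsym i hi).symm
      · rw [Polynomial.revAt_eq_self_of_lt (by omega)]
    have hlc : 0 ≤ f.leadingCoeff := hnonneg _
    have hroots : ∀ x : ℝ, f.eval x = 0 → x ≤ 0 := by
      intro x hx
      by_contra hpos
      push_neg at hpos
      have hev : f.eval x = ∑ i ∈ Finset.range (f.natDegree + 1), f.coeff i * x ^ i :=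
        Polynomial.eval_eq_sum_range x
      have hterm : 0 < f.coeff f.natDegree * x ^ f.natDegree := by
        apply mul_pos
        · exact lt_of_le_of_ne (hnonneg _)
            (Ne.symm (Polynomial.leadingCoeff_ne_zero.mpr hf0))
        · positivity
      have hge : f.coeff f.natDegree * x ^ f.natDegree ≤ f.eval x := by
        rw [hev]
        apply Finset.single_le_sum (f := fun i => f.coeff i * x ^ i)
        · intro i _
          apply mul_nonneg (hnonneg i)
          positivity
        · exact Finset.self_mem_range_succ _
      linarith [hx ▸ lt_of_lt_of_le hterm hge]
    obtain ⟨γ', hγ'0, hγ'v, hγ'e⟩ := lemA d f hdeg hrefl hreal hlc hroots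
    have hz : ∑ i ∈ Finset.range (d/2+1), C (γ i - γ' i) * X ^ i * (1+X) ^ (d - 2*i) = 0 := by
      have hsplit : ∑ i ∈ Finset.range (d/2+1), C (γ i - γ' i) * X ^ i * (1+X) ^ (d - 2*i)
          = (∑ i ∈ Finset.range (d/2+1), C (γ i) * X ^ i * (1+X) ^ (d - 2*i))
            - ∑ i ∈ Finset.range (d/2+1), C (γ' i) * X ^ i * (1+X) ^ (d - 2*i) := by
        rw [← Finset.sum_sub_distrib]
        apply Finset.sum_congr rfl
        intro i hi
        rw [Polynomial.C_sub]
        ring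
      rw [hsplit, ← hγ, ← hγ'e, sub_self]
    have huq := gamma_uniq d (fun i => γ i - γ' i) hz
    intro i
    by_cases hi : i < d/2+1
    · have h1 := huq i (Finset.mem_range.mpr hi)
      have : γ i = γ' i := by linarith
      rw [this]
      exact hγ'0 i
    · rw [hγ0 i (by omega)]
end

section
/- For every k ≥ 1, the identity ∑_{ℓ=1}^{k} ∑_{(j_1,…,j_{ℓ+1}) : j_1+⋯+j_{ℓ+1}=k-ℓ, j_m ≥ 0} ∏_{m=1}^{ℓ+1} (j_m+1)^{j_m}/(j_m+1)! = k·(k+1)^k/(k+1)! holds. -/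
open Finset

lemma findiff : ∀ (j : ℕ), ∀ d < j, ∀ x : ℚ,
    ∑ p ∈ range (j+1), (-1:ℚ)^p * (j.choose p) * (x + p)^d = 0 := by
  intro j
  induction j with
  | zero => intro d hd; omega
  | succ j ih =>
    intro d hd x
    set F : ℕ → ℚ := fun p => (-1:ℚ)^p * (j.choose p) * (x + p)^d with hF
    set G : ℕ → ℚ := fun p => (-1:ℚ)^p * (j.choose p) * ((x+1) + p)^d with hG
    set Fn : ℕ → ℚ := fun p => (-1:ℚ)^p * ((j+1).choose p) * (x + p)^d with hFn
    have key : ∀ p, Fn (p+1) = F (p+1) - G p := by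
      intro p
      simp only [hF, hG, hFn, Nat.choose_succ_succ j p]
      push_cast
      rw [pow_succ]
      ring
    have split : ∑ p ∈ range (j+2), Fn p
        = (∑ p ∈ range (j+1), F p) - ∑ p ∈ range (j+1), G p := by
      calc ∑ p ∈ range (j+2), Fn p
          = (∑ p ∈ range (j+1), Fn (p+1)) + Fn 0 := Finset.sum_range_succ' _ _
        _ = (∑ p ∈ range (j+1), (F (p+1) - G p)) + F 0 := by
            rw [Finset.sum_congr rfl (fun p _ => key p)]
            simp [hF, hFn]
        _ = ((∑ p ∈ range (j+1), F (p+1)) + F 0) - ∑ p ∈ range (j+1), G p := by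
            rw [Finset.sum_sub_distrib]; ring
        _ = (∑ p ∈ range (j+2), F p) - ∑ p ∈ range (j+1), G p := by
            rw [← Finset.sum_range_succ' F]
        _ = (∑ p ∈ range (j+1), F p) - ∑ p ∈ range (j+1), G p := by
            rw [Finset.sum_range_succ]
            simp [hF, Nat.choose_succ_self]
    rw [split]
    rcases Nat.lt_or_ge d j with h | h
    · rw [hF, hG]
      rw [ih d h x, ih d h (x+1)]; ring
    · have hdj : d = j := by omega
      have expand : ∀ p ∈ range (j+1), G p
          = ∑ e ∈ range (j+1), (j.choose e : ℚ) * ((-1:ℚ)^p * (j.choose p) * (x + p)^e) := by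
        intro p _
        simp only [hG]
        have h1 : (-1:ℚ)^p * (j.choose p) * ((x+1) + (p:ℚ))^d = (-1:ℚ)^p * (j.choose p) * ((x + p) + 1)^d := by ring_nf
        rw [h1, hdj, add_pow]
        simp only [one_pow]
        rw [Finset.mul_sum]
        apply Finset.sum_congr rfl
        intro e _
        ring
      have vanish : ∀ e ∈ range j,
          (∑ p ∈ range (j+1), (j.choose e : ℚ) * ((-1:ℚ)^p * (j.choose p) * (x + p)^e)) = 0 := by
        intro e he
        rw [← Finset.mul_sum, ih e (mem_range.mp he) x, mul_zero]
      have outer : (∑ e ∈ range (j+1), ∑ p ∈ range (j+1),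
            (j.choose e : ℚ) * ((-1:ℚ)^p * (j.choose p) * (x + p)^e))
          = ∑ p ∈ range (j+1), F p := by
        rw [Finset.sum_range_succ, Finset.sum_congr rfl vanish]
        simp [hF, hdj]
      rw [Finset.sum_congr rfl expand, Finset.sum_comm, outer, sub_self]

noncomputable def ab (x : ℚ) (p : ℕ) : ℚ := if p = 0 then 1 else x * (x + p) ^ (p - 1)

lemma ab_zero (x : ℚ) : ab x 0 = 1 := by simp [ab]
lemma ab_succ (x : ℚ) (p : ℕ) : ab x (p+1) = x * (x + ((p:ℚ)+1)) ^ p := by simp [ab]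

lemma choose_helper {n p i : ℕ} (h : p + i ≤ n) :
    n.choose p * (n-p).choose i = n.choose i * (n-i).choose p := by
  have h1 : n - p ≤ n := Nat.sub_le _ _
  have h2 : i ≤ n - p := by omega
  have e1 := Nat.choose_mul (n := n) h2
  rw [Nat.choose_symm (show p ≤ n by omega)] at e1
  rw [e1]
  congr 1
  have h3 : n - p - i ≤ n - i := by omega
  have e2 := Nat.choose_symm h3
  rw [← e2]
  congr 1
  omega

lemma abel1 (n : ℕ) (x y : ℚ) :
    ∑ p ∈ range (n+1), (n.choose p : ℚ) * ab x p * (y + ((n-p : ℕ):ℚ))^(n-p)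
      = (x + y + n)^n := by
  have step1 : ∀ p ∈ range (n+1),
      (n.choose p : ℚ) * ab x p * (y + ((n-p : ℕ):ℚ))^(n-p)
        = ∑ i ∈ range (n+1), (x+y+n)^i *
            ((n.choose p : ℚ) * ((n-p).choose i : ℚ) * ab x p * (-(x+p))^(n-p-i)) := by
    intro p hp
    have hp' : p ≤ n := by have := mem_range.mp hp; omega
    have hyq : y + ((n-p:ℕ):ℚ) = (x+y+(n:ℚ)) + (-(x+p)) := by
      rw [Nat.cast_sub hp']; ring
    rw [hyq, add_pow]
    have hrestrict : ∑ i ∈ range (n+1), (x+y+n)^i *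
            ((n.choose p : ℚ) * ((n-p).choose i : ℚ) * ab x p * (-(x+p))^(n-p-i))
        = ∑ i ∈ range (n-p+1), (x+y+n)^i *
            ((n.choose p : ℚ) * ((n-p).choose i : ℚ) * ab x p * (-(x+p))^(n-p-i)) := by
      refine (Finset.sum_subset (Finset.range_subset_range.mpr (by omega)) ?_).symm
      intro i _ hi
      have : n - p < i := by simpa using Nat.lt_of_succ_le (by simpa [Nat.succ_le_iff] using (mem_range.not.mp hi))
      simp [Nat.choose_eq_zero_of_lt this]
    rw [hrestrict, Finset.mul_sum]
    apply Finset.sum_congr rfl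
    intro i _
    ring
  rw [Finset.sum_congr rfl step1, Finset.sum_comm]
  have inner0 : ∀ i ∈ range n,
      (∑ p ∈ range (n+1), (x+y+n)^i *
          ((n.choose p : ℚ) * ((n-p).choose i : ℚ) * ab x p * (-(x+p))^(n-p-i))) = 0 := by
    intro i hi
    have hin : i < n := mem_range.mp hi
    rw [← Finset.mul_sum]
    apply mul_eq_zero_of_right
    have hterm : ∀ p ∈ range (n+1),
        (n.choose p : ℚ) * ((n-p).choose i : ℚ) * ab x p * (-(x+p))^(n-p-i)
          = ((n.choose i : ℚ) * (-1)^(n-i) * x) *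
              ((-1:ℚ)^p * (((n-i).choose p : ℚ)) * (x+p)^(n-1-i)) := by
      intro p hp
      have hp' : p ≤ n := by have := mem_range.mp hp; omega
      rcases le_or_gt (p + i) n with hpi | hpi
      · have hch := choose_helper hpi
        have e1 : (-(x+(p:ℚ)))^(n-p-i) = (-1:ℚ)^(n-p-i) * (x+p)^(n-p-i) := by
          rw [neg_pow]
        have sign : (-1:ℚ)^(n-p-i) = (-1:ℚ)^(n-i) * (-1)^p := by
          have : (-1:ℚ)^(n-i) = (-1:ℚ)^(n-p-i) * (-1)^p := by
            rw [← pow_add]; congr 1; omega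
          rw [this, mul_assoc, ← pow_add]
          simp [pow_add, pow_mul]
          rw [← pow_add]
          have h2 : p + p = 2 * p := by ring
          rw [h2, pow_mul]
          norm_num
        have abpow : ab x p * (x+(p:ℚ))^(n-p-i) = x * (x+(p:ℚ))^(n-1-i) := by
          rcases p with _ | q
          · rw [ab_zero]
            push_cast
            have e : n - 0 - i = (n - 1 - i) + 1 := by omega
            rw [e, one_mul]
            ring
          · rw [ab_succ, mul_assoc]
            push_cast
            rw [← pow_add]
            congr 2
            omega
        rw [e1, sign]
        have hcast : (n.choose p : ℚ) * ((n-p).choose i : ℚ)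
            = (n.choose i : ℚ) * (((n-i).choose p : ℚ)) := by
          exact_mod_cast hch
        calc (n.choose p : ℚ) * ((n-p).choose i : ℚ) * ab x p * ((-1:ℚ)^(n-i) * (-1)^p * (x+p)^(n-p-i))
            = (n.choose p : ℚ) * ((n-p).choose i : ℚ) * (ab x p * (x+p)^(n-p-i)) * ((-1:ℚ)^(n-i) * (-1)^p) := by ring
          _ = (n.choose i : ℚ) * (((n-i).choose p : ℚ)) * (x * (x+p)^(n-1-i)) * ((-1:ℚ)^(n-i) * (-1)^p) := by
              rw [abpow, hcast]
          _ = _ := by ring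
      · have c1 : (n-p).choose i = 0 := Nat.choose_eq_zero_of_lt (by omega)
        have c2 : (n-i).choose p = 0 := Nat.choose_eq_zero_of_lt (by omega)
        simp [c1, c2]
    rw [Finset.sum_congr rfl hterm, ← Finset.mul_sum]
    apply mul_eq_zero_of_right
    have hrestrict : ∑ p ∈ range (n+1), (-1:ℚ)^p * (((n-i).choose p : ℚ)) * (x+p)^(n-1-i)
        = ∑ p ∈ range ((n-i)+1), (-1:ℚ)^p * (((n-i).choose p : ℚ)) * (x+p)^(n-1-i) := by
      refine (Finset.sum_subset (Finset.range_subset_range.mpr (by omega)) ?_).symm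
      intro p _ hp
      have : n - i < p := by
        have := mem_range.not.mp hp; omega
      simp [Nat.choose_eq_zero_of_lt this]
    rw [hrestrict]
    exact findiff (n-i) (n-1-i) (by omega) x
  rw [Finset.sum_range_succ, Finset.sum_congr rfl inner0]
  simp only [Finset.sum_const_zero, zero_add]
  rw [Finset.sum_range_succ']
  have hzero : ∀ p ∈ range n, (x+y+n)^n *
      ((n.choose (p+1) : ℚ) * ((n-(p+1)).choose n : ℚ) * ab x (p+1) * (-(x+(p+1:ℕ)))^(n-(p+1)-n)) = 0 := by
    intro p hp
    have hpn : p < n := mem_range.mp hp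
    have : n - (p+1) < n := by omega
    simp [Nat.choose_eq_zero_of_lt this]
  rw [Finset.sum_congr rfl hzero]
  simp [ab_zero]

lemma ab_eq (y : ℚ) (q : ℕ) : ab y q = (y+q)^q - q*(y+q)^(q-1) := by
  rcases q with _ | r
  · simp [ab_zero]
  · rw [ab_succ]
    push_cast
    have h : (y + ((r:ℚ)+1))^(r+1) = (y + ((r:ℚ)+1))^r * (y + ((r:ℚ)+1)) := pow_succ _ _
    rw [h]
    ring

lemma hurwitz (n : ℕ) (x y : ℚ) :
    ∑ p ∈ range (n+1), (n.choose p : ℚ) * ab x p * ab y (n-p) = ab (x+y) n := by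
  rcases n with _ | m
  · simp [ab_zero]
  have split : ∀ p ∈ range (m+2), ((m+1).choose p : ℚ) * ab x p * ab y (m+1-p)
      = ((m+1).choose p : ℚ) * ab x p * (y + ((m+1-p : ℕ):ℚ))^(m+1-p)
        - ((m+1).choose p : ℚ) * ab x p * (((m+1-p : ℕ):ℚ) * (y + ((m+1-p : ℕ):ℚ))^(m+1-p-1)) := by
    intro p _
    rw [ab_eq y (m+1-p)]
    ring
  rw [Finset.sum_congr rfl split, Finset.sum_sub_distrib, abel1 (m+1) x y]
  have second : ∑ p ∈ range (m+2), ((m+1).choose p : ℚ) * ab x p *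
        (((m+1-p : ℕ):ℚ) * (y + ((m+1-p : ℕ):ℚ))^(m+1-p-1))
      = ((m:ℚ)+1) * ∑ p ∈ range (m+1), (m.choose p : ℚ) * ab x p * ((y+1) + ((m-p : ℕ):ℚ))^(m-p) := by
    rw [Finset.sum_range_succ]
    simp only [Nat.sub_self, Nat.cast_zero, zero_mul, mul_zero, add_zero]
    rw [Finset.mul_sum]
    apply Finset.sum_congr rfl
    intro p hp
    have hp' : p ≤ m := by have := mem_range.mp hp; omega
    have hexp : m+1-p-1 = m - p := by omega
    have hbase : (y + ((m+1-p : ℕ):ℚ)) = ((y+1) + ((m-p : ℕ):ℚ)) := by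
      rw [Nat.cast_sub (by omega), Nat.cast_sub hp']
      push_cast
      ring
    have hc : ((m+1-p:ℕ):ℚ) * ((m+1).choose p) = ((m:ℚ)+1) * (m.choose p) := by
      have := Nat.choose_mul_succ_eq m p
      have h2 : (m.choose p * (m+1) : ℚ) = ((m+1).choose p * (m+1-p) : ℕ) := by exact_mod_cast congrArg Nat.cast this
      push_cast at h2
      linarith [h2]
    rw [hexp, hbase]
    calc ((m+1).choose p : ℚ) * ab x p * (((m+1-p : ℕ):ℚ) * ((y+1) + ((m-p : ℕ):ℚ))^(m-p))
        = (((m+1-p:ℕ):ℚ) * ((m+1).choose p)) * (ab x p * ((y+1) + ((m-p : ℕ):ℚ))^(m-p)) := by ring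
      _ = (((m:ℚ)+1) * (m.choose p)) * (ab x p * ((y+1) + ((m-p : ℕ):ℚ))^(m-p)) := by rw [hc]
      _ = _ := by ring
  rw [second, abel1 m x (y+1), ab_succ]
  push_cast
  ring

lemma sum_adt_succ (m n : ℕ) (f : (Fin (m+1) → ℕ) → ℚ) :
    ∑ j ∈ Finset.Nat.antidiagonalTuple (m+1) n, f j
      = ∑ p ∈ (Finset.HasAntidiagonal.antidiagonal n : Finset (ℕ × ℕ)), ∑ j ∈ Finset.Nat.antidiagonalTuple m p.2, f (Fin.cons p.1 j) := by
  rw [Finset.sum_sigma']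
  refine Finset.sum_nbij'
    (fun a => (⟨(a 0, ∑ i, Fin.tail a i), Fin.tail a⟩ : (_ : ℕ × ℕ) × (Fin m → ℕ)))
    (fun e => Fin.cons e.1.1 e.2) ?_ ?_ ?_ ?_ ?_
  · intro a ha
    rw [Finset.Nat.mem_antidiagonalTuple] at ha
    rw [Finset.mem_sigma, Finset.HasAntidiagonal.mem_antidiagonal]
    constructor
    · rw [← ha, Fin.sum_univ_succ]; rfl
    · rw [Finset.Nat.mem_antidiagonalTuple]
  · rintro ⟨⟨a, b⟩, g⟩ he
    rw [Finset.mem_sigma, Finset.HasAntidiagonal.mem_antidiagonal, Finset.Nat.mem_antidiagonalTuple] at he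
    rw [Finset.Nat.mem_antidiagonalTuple, Fin.sum_cons]
    simp only at he ⊢
    rw [he.2, he.1]
  · intro a _
    exact Fin.cons_self_tail a
  · rintro ⟨⟨a, b⟩, g⟩ he
    rw [Finset.mem_sigma, Finset.HasAntidiagonal.mem_antidiagonal, Finset.Nat.mem_antidiagonalTuple] at he
    simp only [Fin.cons_zero, Fin.tail_cons] at *
    rw [he.2]
  · intro a _
    rw [Fin.cons_self_tail a]

lemma g_eq (k : ℕ) : ((k:ℚ)+1)^k / ((k+1).factorial : ℚ) = ab 1 k / (k.factorial : ℚ) := by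
  rcases k with _ | q
  · simp [ab_zero]
  · rw [ab_succ]
    rw [Nat.factorial_succ (q+1)]
    push_cast
    have h1 : ((q:ℚ)+1+1)^(q+1) = ((q:ℚ)+1+1)^q * ((q:ℚ)+1+1) := pow_succ _ _
    have h2 : ((q+1).factorial : ℚ) ≠ 0 := by exact_mod_cast (q+1).factorial_ne_zero
    have h3 : ((q:ℚ)+1+1) ≠ 0 := by positivity
    field_simp
    rw [h1]
    ring
  
lemma key_s9 (m : ℕ) (hm : 1 ≤ m) (n : ℕ) :
    ∑ j ∈ Finset.Nat.antidiagonalTuple m n,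
        ∏ i : Fin m, ((j i + 1 : ℚ)) ^ (j i) / (Nat.factorial (j i + 1) : ℚ)
      = ab (m:ℚ) n / (n.factorial : ℚ) := by
  induction m, hm using Nat.le_induction generalizing n with
  | base =>
    rw [Finset.Nat.antidiagonalTuple_one, Finset.sum_singleton]
    rw [Fin.prod_univ_one]
    simp only [Matrix.cons_val_zero]
    exact_mod_cast g_eq n
  | succ m hm ih =>
    rw [sum_adt_succ m n (fun j => ∏ i : Fin (m+1), ((j i + 1 : ℚ)) ^ (j i) / (Nat.factorial (j i + 1) : ℚ))]
    have inner : ∀ p ∈ (Finset.HasAntidiagonal.antidiagonal n : Finset (ℕ × ℕ)),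
        (∑ j ∈ Finset.Nat.antidiagonalTuple m p.2,
          ∏ i : Fin (m+1), (((Fin.cons p.1 j : Fin (m+1) → ℕ) i + 1 : ℚ)) ^ ((Fin.cons p.1 j : Fin (m+1) → ℕ) i) / (Nat.factorial ((Fin.cons p.1 j : Fin (m+1) → ℕ) i + 1) : ℚ))
        = (((p.1:ℚ) + 1) ^ p.1 / (Nat.factorial (p.1 + 1) : ℚ)) * (ab (m:ℚ) p.2 / (p.2.factorial : ℚ)) := by
      intro p _
      have hsplit : ∀ j ∈ Finset.Nat.antidiagonalTuple m p.2,
          (∏ i : Fin (m+1), (((Fin.cons p.1 j : Fin (m+1) → ℕ) i + 1 : ℚ)) ^ ((Fin.cons p.1 j : Fin (m+1) → ℕ) i) / (Nat.factorial ((Fin.cons p.1 j : Fin (m+1) → ℕ) i + 1) : ℚ))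
          = (((p.1:ℚ) + 1) ^ p.1 / (Nat.factorial (p.1 + 1) : ℚ)) *
              ∏ i : Fin m, ((j i + 1 : ℚ)) ^ (j i) / (Nat.factorial (j i + 1) : ℚ) := by
        intro j _
        rw [Fin.prod_univ_succ]
        simp [Fin.cons_zero, Fin.cons_succ]
      rw [Finset.sum_congr rfl hsplit, ← Finset.mul_sum, ih p.2]
    rw [Finset.sum_congr rfl inner]
    rw [Finset.Nat.sum_antidiagonal_eq_sum_range_succ_mk]
    have term : ∀ k ∈ range (n+1),
        (((k:ℚ) + 1) ^ k / (Nat.factorial (k + 1) : ℚ)) * (ab (m:ℚ) (n-k) / ((n-k).factorial : ℚ))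
        = ((n.choose k : ℚ) * ab 1 k * ab (m:ℚ) (n-k)) / (n.factorial : ℚ) := by
      intro k hk
      have hk' : k ≤ n := by have := mem_range.mp hk; omega
      rw [g_eq k]
      have hfac : (n.choose k : ℚ) * (k.factorial : ℚ) * ((n-k).factorial : ℚ) = (n.factorial : ℚ) := by
        exact_mod_cast congrArg Nat.cast (Nat.choose_mul_factorial_mul_factorial hk')
      have hd : (n.factorial:ℚ) = (n.choose k : ℚ) * ((k.factorial:ℚ) * ((n-k).factorial:ℚ)) := by
        rw [← hfac]; ring
      have hC : (n.choose k : ℚ) ≠ 0 := by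
        have := Nat.choose_pos hk'
        positivity
      rw [div_mul_div_comm]
      calc ab 1 k * ab (m:ℚ) (n-k) / ((k.factorial:ℚ) * ((n-k).factorial:ℚ))
          = (n.choose k : ℚ) * (ab 1 k * ab (m:ℚ) (n-k)) / ((n.choose k : ℚ) * ((k.factorial:ℚ) * ((n-k).factorial:ℚ))) := (mul_div_mul_left _ _ hC).symm
        _ = _ := by rw [← hd]; ring
    rw [Finset.sum_congr rfl term, ← Finset.sum_div]
    rw [hurwitz n 1 (m:ℚ)]
    have hc : (1:ℚ) + (m:ℚ) = ((m+1 : ℕ) : ℚ) := by push_cast; ring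
    rw [hc]

theorem stmt9 (k : ℕ) (hk : 1 ≤ k) :
    ∑ ℓ ∈ Finset.Icc 1 k, ∑ j ∈ Finset.Nat.antidiagonalTuple (ℓ + 1) (k - ℓ),
        ∏ m : Fin (ℓ + 1), ((j m + 1 : ℚ)) ^ (j m) / (Nat.factorial (j m + 1) : ℚ) =
      (k : ℚ) * (k + 1) ^ k / (Nat.factorial (k + 1) : ℚ) := by
  have hterm : ∀ ℓ ∈ Finset.Icc 1 k,
      (∑ j ∈ Finset.Nat.antidiagonalTuple (ℓ + 1) (k - ℓ),
        ∏ m : Fin (ℓ + 1), ((j m + 1 : ℚ)) ^ (j m) / (Nat.factorial (j m + 1) : ℚ))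
      = ab ((ℓ:ℚ)+1) (k-ℓ) / (((k-ℓ).factorial : ℕ) : ℚ) := by
    intro ℓ _
    rw [key_s9 (ℓ+1) (by omega) (k-ℓ)]
    congr 1
    push_cast
    ring
  rw [Finset.sum_congr rfl hterm]
  set H : ℕ → ℚ := fun ℓ => (∏ i ∈ range ℓ, ((k:ℚ) - i)) * ((k:ℚ)+1)^(k+1-ℓ) / (((k+1).factorial : ℕ) : ℚ) with hH
  have P_fact : ∀ ℓ ≤ k, (∏ i ∈ range ℓ, ((k:ℚ) - i)) * (((k-ℓ).factorial : ℕ) : ℚ) = ((k.factorial : ℕ) : ℚ) := by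
    intro ℓ
    induction ℓ with
    | zero => simp
    | succ l ihl =>
      intro hl
      have hl' : l ≤ k := by omega
      rw [Finset.prod_range_succ]
      have e1 : (k - l) = (k - (l+1)) + 1 := by omega
      have hprev := ihl hl'
      rw [e1, Nat.factorial_succ] at hprev
      have e2 : ((k:ℚ) - l) = ((k - (l+1) : ℕ) : ℚ) + 1 := by
        rw [Nat.cast_sub (by omega : l+1 ≤ k)]
        push_cast
        ring
      rw [e2]
      push_cast at hprev ⊢
      linear_combination hprev
  have hkfne : ((k.factorial : ℕ) : ℚ) ≠ 0 := by exact_mod_cast k.factorial_ne_zero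
  have tele : ∀ ℓ ∈ Finset.Icc 1 k,
      ab ((ℓ:ℚ)+1) (k-ℓ) / (((k-ℓ).factorial : ℕ) : ℚ) = H ℓ - H (ℓ+1) := by
    intro ℓ hl
    have h2 : ℓ ≤ k := (Finset.mem_Icc.mp hl).2
    have hfℓ := P_fact ℓ h2
    have hPne : (∏ i ∈ range ℓ, ((k:ℚ) - i)) ≠ 0 := by
      intro h0
      rw [h0, zero_mul] at hfℓ
      exact hkfne hfℓ.symm
    have hHd : H ℓ - H (ℓ+1)
        = (∏ i ∈ range ℓ, ((k:ℚ) - i)) * (((ℓ:ℚ)+1) * ((k:ℚ)+1)^(k-ℓ)) / (((k+1).factorial : ℕ) : ℚ) := by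
      simp only [hH]
      rw [Finset.prod_range_succ]
      have e1 : k+1-ℓ = (k-ℓ)+1 := by omega
      have e2 : k+1-(ℓ+1) = k-ℓ := by omega
      rw [e1, e2, pow_succ, div_sub_div_same]
      congr 1
      ring
    rw [hHd]
    have hfacs : (((k+1).factorial : ℕ) : ℚ) = ((k:ℚ)+1) * ((k.factorial : ℕ) : ℚ) := by
      rw [Nat.factorial_succ]
      push_cast
      ring
    have hk1 : ((k:ℚ)+1) ≠ 0 := by positivity
    rcases Nat.lt_or_ge ℓ k with hlk | hlk
    · obtain ⟨q, hq⟩ : ∃ q, k - ℓ = q + 1 := ⟨k - ℓ - 1, by omega⟩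
      rw [hq] at hfℓ ⊢
      rw [ab_succ]
      have hnk : ℓ + q + 1 = k := by omega
      have ebase : ((ℓ:ℚ)+1) + ((q:ℚ)+1) = (k:ℚ)+1 := by
        have : ((ℓ:ℚ) + (q:ℚ) + 1) = (k:ℚ) := by exact_mod_cast congrArg (Nat.cast : ℕ → ℚ) hnk
        linarith
      rw [ebase, hfacs, ← hfℓ, pow_succ]
      have hF1 : (((q+1).factorial : ℕ) : ℚ) ≠ 0 := by exact_mod_cast (q+1).factorial_ne_zero
      field_simp
    · have hlk' : ℓ = k := by omega
      subst hlk'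
      rw [Nat.sub_self] at hfℓ ⊢
      rw [ab_zero, hfacs, ← hfℓ]
      simp only [Nat.factorial_zero, Nat.cast_one, mul_one, pow_zero]
      field_simp
  rw [Finset.sum_congr rfl tele]
  rw [← Finset.Ico_add_one_right_eq_Icc, Finset.sum_Ico_eq_sum_range]
  simp only [Nat.add_sub_cancel]
  have htel := Finset.sum_range_sub' (fun i => H (1+i)) k
  rw [show (∑ x ∈ range k, (H (1 + x) - H (1 + x + 1))) = H (1+0) - H (1+k) from htel]
  have hzero : H (1+k) = 0 := by
    simp only [hH]
    rw [Finset.prod_eq_zero (i := k) (by rw [Finset.mem_range]; omega) (by rw [sub_self])]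
    simp
  have hone : H (1+0) = (k:ℚ) * ((k:ℚ)+1)^k / (((k+1).factorial : ℕ) : ℚ) := by
    simp only [hH]
    rw [Finset.prod_range_one]
    norm_num
  rw [hzero, hone]
  ring
end

section
/- Let W(t) = ∑_{j≥0} (-(j+1))^j/(j+1)! · t^{j+1} as a formal power series over ℚ. Then W(t)·exp(W(t)) = t as formal power series. -/
section Aux
open Finset

/-- Finite difference lemma: alternating binomial sums kill low-degree polynomials. -/
lemma finDiff {R : Type*} [CommRing R] :
    ∀ (n : ℕ), ∀ j < n, ∀ c : R,
      ∑ k ∈ range (n + 1), (-1 : R) ^ k * (n.choose k : R) * (c + k) ^ j = 0 := by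
  intro n
  induction n with
  | zero => intro j hj; omega
  | succ n ih =>
    intro j hj c
    have key : ∑ k ∈ range (n + 2), (-1 : R) ^ k * ((n+1).choose k : R) * (c + k) ^ j
        = (∑ k ∈ range (n + 1), (-1 : R) ^ k * (n.choose k : R) * (c + k) ^ j)
          - ∑ k ∈ range (n + 1), (-1 : R) ^ k * (n.choose k : R) * ((c+1) + k) ^ j := by
      rw [Finset.sum_range_succ' (fun k => (-1 : R) ^ k * ((n+1).choose k : R) * (c + k) ^ j)]
      have h1 : ∀ k ∈ range (n+1),
          (-1 : R) ^ (k+1) * ((n+1).choose (k+1) : R) * (c + (k+1 : ℕ)) ^ j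
          = -((-1 : R) ^ k * (n.choose k : R) * ((c+1) + k) ^ j)
            + -((-1 : R) ^ k * (n.choose (k+1) : R) * (c + (k+1 : ℕ)) ^ j) := by
        intro k _
        rw [Nat.choose_succ_succ]
        push_cast
        rw [show c + ((k : R) + 1) = (c + 1) + k by ring]
        ring
      rw [Finset.sum_congr rfl h1, Finset.sum_add_distrib]
      have h2 : ∑ k ∈ range (n+1), -((-1 : R) ^ k * (n.choose (k+1) : R) * (c + (k+1 : ℕ)) ^ j)
          = (∑ k ∈ range (n + 1), (-1 : R) ^ k * (n.choose k : R) * (c + k) ^ j)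
              - (n.choose 0 : R) * (c + (0:ℕ))^j := by
        rw [Finset.sum_range_succ
          (fun k => -((-1 : R) ^ k * (n.choose (k+1) : R) * (c + (k+1 : ℕ)) ^ j))]
        rw [Nat.choose_succ_self]
        rw [Finset.sum_range_succ' (fun k => (-1 : R) ^ k * (n.choose k : R) * (c + k) ^ j)]
        have : ∀ k ∈ range n, -((-1:R)^k * (n.choose (k+1) : R) * (c + (k+1:ℕ))^j)
            = (-1:R)^(k+1) * (n.choose (k+1) : R) * (c + (k+1:ℕ))^j := by
          intro k _; ring
        rw [Finset.sum_congr rfl this]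
        push_cast
        ring
      rw [h2]
      push_cast
      have : ∀ k ∈ range (n+1), -((-1 : R) ^ k * (n.choose k : R) * ((c+1) + k) ^ j)
          = -1 * ((-1 : R) ^ k * (n.choose k : R) * ((c+1) + k) ^ j) := by intro k _; ring
      rw [Finset.sum_congr rfl this, ← Finset.mul_sum]
      simp only [Nat.choose_zero_right, Nat.cast_one, Nat.cast_zero, one_mul]
      ring
    rcases Nat.lt_or_ge j n with h | h
    · rw [key, ih j h c, ih j h (c+1)]; ring
    · obtain rfl : j = n := by omega
      rw [key]
      have expand : ∀ k ∈ range (j+1),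
          (-1 : R) ^ k * (j.choose k : R) * ((c+1) + k) ^ j
          = ∑ i ∈ range (j+1), (j.choose i : R) *
              ((-1 : R) ^ k * (j.choose k : R) * (c + k) ^ i) := by
        intro k _
        rw [show (c+1) + (k:R) = (c + k) + 1 by ring, add_pow]
        rw [Finset.mul_sum]
        apply Finset.sum_congr rfl; intro i _
        simp only [one_pow, mul_one]
        ring
      rw [Finset.sum_congr rfl expand, Finset.sum_comm]
      rw [Finset.sum_range_succ
        (fun i => ∑ k ∈ range (j+1), (j.choose i : R) * ((-1 : R) ^ k * (j.choose k : R) * (c + k) ^ i))]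
      have hzero : ∑ i ∈ range j, ∑ k ∈ range (j+1), (j.choose i : R) *
          ((-1 : R) ^ k * (j.choose k : R) * (c + k) ^ i) = 0 := by
        apply Finset.sum_eq_zero; intro i hi
        rw [← Finset.mul_sum, ih i (Finset.mem_range.mp hi) c, mul_zero]
      rw [hzero, zero_add, ← Finset.mul_sum]
      simp [Nat.choose_self]

section Hurwitz
open Polynomial

local notation "A" => Polynomial ℚ
local notation "S" => Polynomial (Polynomial ℚ)

/-- `xp i = x (x+i+1)^i`. -/
noncomputable def xp (i : ℕ) : Polynomial ℚ :=
  Polynomial.X * (Polynomial.X + (i : Polynomial ℚ) + 1) ^ i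

/-- Hurwitz sum. -/
noncomputable def hF (N : ℕ) (t : Polynomial ℚ) : S :=
  (X + C t + (N : S) + 1) ^ (N+1)
    + ∑ p ∈ antidiagonal N,
        C ((((N+1).choose (p.1+1) : ℕ) : Polynomial ℚ) * xp p.1) * (X + C t + (p.2 : S)) ^ p.2

lemma chooseId {i j N : ℕ} (h : i + j = N) :
    (N+2).choose (i+1) * (j+1) = (N+2) * ((N+1).choose (i+1)) := by
  have h1 : (N+2).choose (i+1) = (N+2).choose (j+1) := by
    rw [← Nat.choose_symm (by omega : i+1 ≤ N+2)]; congr 1; omega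
  have h2 : (N+1).choose (i+1) = (N+1).choose j := by
    rw [← Nat.choose_symm (by omega : i+1 ≤ N+1)]; congr 1; omega
  rw [h1, h2]
  have h3 : (N+2) * (N+1).choose j = (N+2).choose (j+1) * (j+1) := by
    simpa [Nat.succ_eq_add_one] using Nat.add_one_mul_choose_eq (N+1) j
  omega

lemma hF_zero (t : A) : hF 0 t = (C (Polynomial.X : A) + X + C t + 1) ^ 1 := by
  simp [hF, xp]
  ring

lemma deriv_hF (N : ℕ) (t : A) :
    derivative (hF (N+1) t) = ((N+2 : ℕ) : S) * hF N (t+1) := by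
  unfold hF
  rw [derivative_add, derivative_sum]
  have firstTerm : derivative ((X + C t + ((N+1 : ℕ) : S) + 1) ^ (N+1+1))
      = ((N+2 : ℕ) : S) * (X + C (t+1) + (N : S) + 1) ^ (N+1) := by
    rw [derivative_pow]
    have : derivative (X + C t + ((N+1 : ℕ) : S) + 1) = 1 := by
      simp
    rw [this, mul_one]
    have : (X + C t + ((N+1 : ℕ) : S) + 1) = (X + C (t+1) + (N : S) + 1) := by
      push_cast
      rw [map_add, C_1]
      ring
    rw [this, map_natCast]
    push_cast
    ring
  rw [firstTerm]
  rw [Finset.Nat.antidiagonal_succ']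
  rw [Finset.sum_cons]
  simp only [pow_zero, derivative_one, mul_zero, zero_add, Finset.sum_map,
    Function.Embedding.coe_prodMap, Function.Embedding.coeFn_mk, Function.Embedding.refl_apply,
    Prod.map_fst, Prod.map_snd, mul_one, derivative_C, Prod.map_apply, id_eq]
  have termEq : ∀ p ∈ antidiagonal N,
      derivative (C ((((N+2).choose (p.1+1) : ℕ) : Polynomial ℚ) * xp p.1)
          * (X + C t + ((Nat.succ p.2 : ℕ) : S)) ^ (Nat.succ p.2))
      = ((N+2 : ℕ) : S) *
          (C ((((N+1).choose (p.1+1) : ℕ) : Polynomial ℚ) * xp p.1)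
            * (X + C (t+1) + (p.2 : S)) ^ p.2) := by
    intro p hp
    have hij : p.1 + p.2 = N := Finset.HasAntidiagonal.mem_antidiagonal.mp hp
    rw [derivative_C_mul, derivative_pow]
    have hd : derivative (X + C t + ((Nat.succ p.2 : ℕ) : S)) = 1 := by simp
    rw [hd, mul_one]
    have hbase : (X + C t + ((Nat.succ p.2 : ℕ) : S)) = (X + C (t+1) + (p.2 : S)) := by
      push_cast
      rw [map_add, C_1]
      ring
    rw [hbase]
    have hexp : Nat.succ p.2 - 1 = p.2 := rfl
    rw [hexp]
    have hch : ((Nat.succ p.2 : ℕ) : Polynomial ℚ) * (((N+2).choose (p.1+1) : ℕ) : Polynomial ℚ)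
        = ((N+2 : ℕ) : Polynomial ℚ) * (((N+1).choose (p.1+1) : ℕ) : Polynomial ℚ) := by
      rw [← Nat.cast_mul, ← Nat.cast_mul]
      congr 1
      rw [mul_comm]
      exact chooseId hij
    calc C ((((N+2).choose (p.1+1) : ℕ) : Polynomial ℚ) * xp p.1)
          * (C ((Nat.succ p.2 : ℕ) : Polynomial ℚ) * (X + C (t+1) + (p.2 : S)) ^ p.2)
        = C (((Nat.succ p.2 : ℕ) : Polynomial ℚ) * ((((N+2).choose (p.1+1) : ℕ) : Polynomial ℚ))
            * xp p.1) * (X + C (t+1) + (p.2 : S)) ^ p.2 := by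
          simp only [map_mul]
          ring
      _ = ((N+2 : ℕ) : S) *
          (C ((((N+1).choose (p.1+1) : ℕ) : Polynomial ℚ) * xp p.1)
            * (X + C (t+1) + (p.2 : S)) ^ p.2) := by
          rw [hch]
          simp only [map_mul, map_natCast]
          ring
  rw [Finset.sum_congr rfl termEq, ← Finset.mul_sum]
  ring

lemma eval_hF (N : ℕ) (t : Polynomial ℚ) :
    Polynomial.eval (-(t + ((N+2 : ℕ) : Polynomial ℚ) + Polynomial.X)) (hF (N+1) t) = 0 := by
  set y0 : Polynomial ℚ := -(t + ((N+2 : ℕ) : Polynomial ℚ) + Polynomial.X) with hy0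
  unfold hF
  rw [eval_add, eval_pow, eval_finset_sum]
  have h1 : eval y0 (X + C t + ((N+1 : ℕ) : S) + 1) = -Polynomial.X := by
    simp only [eval_add, eval_X, eval_C, eval_natCast, eval_one, hy0]
    push_cast
    ring
  rw [h1]
  have h2 : ∀ p ∈ antidiagonal (N+1),
      eval y0 (C ((((N+2).choose (p.1+1) : ℕ) : Polynomial ℚ) * xp p.1)
          * (X + C t + (p.2 : S)) ^ p.2)
      = (-1)^(N+2) * Polynomial.X *
          ((-1 : Polynomial ℚ)^(p.1+1) * (((N+2).choose (p.1+1) : ℕ) : Polynomial ℚ)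
            * (Polynomial.X + ((p.1+1 : ℕ) : Polynomial ℚ)) ^ (N+1)) := by
    intro p hp
    have hij : p.1 + p.2 = N+1 := Finset.HasAntidiagonal.mem_antidiagonal.mp hp
    rw [eval_mul, eval_C, eval_pow]
    have hb : eval y0 (X + C t + (p.2 : S))
        = -(Polynomial.X + ((p.1+1 : ℕ) : Polynomial ℚ)) := by
      simp only [eval_add, eval_X, eval_C, eval_natCast, hy0]
      have hc : (p.2 : Polynomial ℚ) = ((N+1 : ℕ) : Polynomial ℚ) - ((p.1 : ℕ) : Polynomial ℚ) := by
        rw [← Nat.cast_sub (by omega : p.1 ≤ N+1)]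
        congr 1
        omega
      rw [hc]
      push_cast
      ring
    rw [hb, neg_pow]
    have hsgn : ((-1 : Polynomial ℚ))^p.2 = (-1)^(N+2) * (-1)^(p.1+1) := by
      rw [← pow_add, show N+2+(p.1+1) = p.2 + 2*(p.1+1) by omega, pow_add, pow_mul]
      norm_num
    unfold xp
    rw [hsgn]
    have hpows : (Polynomial.X + ((p.1 : ℕ) : Polynomial ℚ) + 1) ^ p.1
          * (Polynomial.X + ((p.1+1 : ℕ) : Polynomial ℚ)) ^ p.2
        = (Polynomial.X + ((p.1+1 : ℕ) : Polynomial ℚ)) ^ (N+1) := by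
      have : (Polynomial.X + ((p.1 : ℕ) : Polynomial ℚ) + 1)
          = (Polynomial.X + ((p.1+1 : ℕ) : Polynomial ℚ)) := by push_cast; ring
      rw [this, ← pow_add, show p.1 + p.2 = N+1 from hij]
    calc (((N+2).choose (p.1+1) : ℕ) : Polynomial ℚ)
            * (Polynomial.X * (Polynomial.X + ((p.1 : ℕ) : Polynomial ℚ) + 1) ^ p.1)
            * ((-1)^(N+2) * (-1)^(p.1+1) * (Polynomial.X + ((p.1+1 : ℕ) : Polynomial ℚ)) ^ p.2)
        = ((-1)^(N+2) * Polynomial.X) * ((-1 : Polynomial ℚ)^(p.1+1)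
            * (((N+2).choose (p.1+1) : ℕ) : Polynomial ℚ))
            * ((Polynomial.X + ((p.1 : ℕ) : Polynomial ℚ) + 1) ^ p.1
                * (Polynomial.X + ((p.1+1 : ℕ) : Polynomial ℚ)) ^ p.2) := by ring
      _ = (-1)^(N+2) * Polynomial.X *
          ((-1 : Polynomial ℚ)^(p.1+1) * (((N+2).choose (p.1+1) : ℕ) : Polynomial ℚ)
            * (Polynomial.X + ((p.1+1 : ℕ) : Polynomial ℚ)) ^ (N+1)) := by
        rw [hpows]; ring
  rw [Finset.sum_congr rfl h2, ← Finset.mul_sum]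
  rw [Finset.Nat.sum_antidiagonal_eq_sum_range_succ_mk
    (fun p => ((-1 : Polynomial ℚ)^(p.1+1) * (((N+2).choose (p.1+1) : ℕ) : Polynomial ℚ)
            * (Polynomial.X + ((p.1+1 : ℕ) : Polynomial ℚ)) ^ (N+1))) (N+1)]
  have hfd := finDiff (N+2) (N+1) (by omega) (Polynomial.X : Polynomial ℚ)
  rw [Finset.sum_range_succ'
    (fun k => (-1 : Polynomial ℚ) ^ k * ((N+2).choose k : Polynomial ℚ)
        * ((Polynomial.X : Polynomial ℚ) + (k : ℕ)) ^ (N+1))] at hfd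
  simp only [pow_zero, Nat.choose_zero_right, Nat.cast_one, Nat.cast_zero, one_mul, mul_one,
    add_zero] at hfd
  have hsum : ∑ k ∈ range (N+2),
      ((-1 : Polynomial ℚ)^(k+1) * (((N+2).choose (k+1) : ℕ) : Polynomial ℚ)
        * (Polynomial.X + ((k+1 : ℕ) : Polynomial ℚ)) ^ (N+1))
      = -(Polynomial.X : Polynomial ℚ) ^ (N+1) := by
    linear_combination hfd
  rw [hsum, neg_pow]
  ring

lemma H1 : ∀ (N : ℕ) (t : Polynomial ℚ),
    hF N t = (C (Polynomial.X : Polynomial ℚ) + X + C t + (N : S) + 1) ^ (N+1) := by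
  intro N
  induction N with
  | zero =>
    intro t
    rw [hF_zero]
    norm_num
  | succ N ih =>
    intro t
    have hbase : (C (Polynomial.X : Polynomial ℚ) + X + C t + ((N+1 : ℕ) : S) + 1)
        = (C (Polynomial.X : Polynomial ℚ) + X + C (t+1) + (N : S) + 1) := by
      push_cast
      rw [map_add, C_1]
      ring
    have hd : derivative (hF (N+1) t
        - (C (Polynomial.X : Polynomial ℚ) + X + C t + ((N+1 : ℕ) : S) + 1) ^ (N+2)) = 0 := by
      rw [derivative_sub, deriv_hF, ih (t+1), derivative_pow]
      have h5 : derivative (C (Polynomial.X : Polynomial ℚ) + X + C t + ((N+1 : ℕ) : S) + 1)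
          = 1 := by simp
      rw [h5, mul_one, hbase, map_natCast]
      push_cast
      ring
    have hC := Polynomial.eq_C_of_derivative_eq_zero hd
    set q := hF (N+1) t
      - (C (Polynomial.X : Polynomial ℚ) + X + C t + ((N+1 : ℕ) : S) + 1) ^ (N+2) with hq
    have hev : eval (-(t + ((N+2 : ℕ) : Polynomial ℚ) + Polynomial.X)) q = q.coeff 0 := by
      rw [hC]; simp
    rw [hq] at hev
    rw [eval_sub, eval_hF, eval_pow] at hev
    have hz : eval (-(t + ((N+2 : ℕ) : Polynomial ℚ) + Polynomial.X))
        (C (Polynomial.X : Polynomial ℚ) + X + C t + ((N+1 : ℕ) : S) + 1) = 0 := by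
      simp only [eval_add, eval_X, eval_C, eval_natCast, eval_one]
      push_cast
      ring
    rw [hz, zero_pow (by omega), sub_zero] at hev
    have : q = 0 := by rw [hC, ← hev]; simp
    exact sub_eq_zero.mp (hq ▸ this)

lemma S1eq (N : ℕ) :
    ∑ p ∈ antidiagonal N, C ((((N+2).choose (p.1+1) : ℕ) : Polynomial ℚ) * xp p.1)
        * (X + ((p.2+1 : ℕ) : S)) ^ (p.2+1)
      = (C (Polynomial.X : Polynomial ℚ) + X + ((N+2 : ℕ) : S)) ^ (N+2)
        - (X + ((N+2 : ℕ) : S)) ^ (N+2) - C (xp (N+1)) := by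
  have h := H1 (N+1) 0
  unfold hF at h
  rw [Finset.Nat.antidiagonal_succ', Finset.sum_cons, Finset.sum_map] at h
  simp only [Function.Embedding.coe_prodMap, Function.Embedding.coeFn_mk,
    Function.Embedding.refl_apply, Prod.map_fst, Prod.map_snd, Prod.map_apply, id_eq,
    Nat.succ_eq_add_one, Nat.choose_self, map_zero, add_zero, C_0, pow_zero, mul_one,
    Nat.cast_one, one_mul] at h
  push_cast at h ⊢
  linear_combination h

lemma S2eq (N : ℕ) :
    ∑ p ∈ antidiagonal N, C ((((N+1).choose (p.1+1) : ℕ) : Polynomial ℚ) * xp p.1)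
        * (X + C 1 + (p.2 : S)) ^ p.2
      = (C (Polynomial.X : Polynomial ℚ) + X + C 1 + (N : S) + 1) ^ (N+1)
        - (X + C 1 + (N : S) + 1) ^ (N+1) := by
  have h := H1 N 1
  unfold hF at h
  linear_combination h

lemma H2 (N : ℕ) :
    C (xp (N+1)) + X * (X + ((N+2 : ℕ) : S)) ^ (N+1)
      + ∑ p ∈ antidiagonal N, C ((((N+2).choose (p.1+1) : ℕ) : Polynomial ℚ) * xp p.1)
          * (X * (X + ((p.2+1 : ℕ) : S)) ^ p.2)
    = (C (Polynomial.X : Polynomial ℚ) + X)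
        * (C (Polynomial.X : Polynomial ℚ) + X + ((N+2 : ℕ) : S)) ^ (N+1) := by
  have hsplit : ∀ p ∈ antidiagonal N,
      C ((((N+2).choose (p.1+1) : ℕ) : Polynomial ℚ) * xp p.1)
          * (X * (X + ((p.2+1 : ℕ) : S)) ^ p.2)
      = C ((((N+2).choose (p.1+1) : ℕ) : Polynomial ℚ) * xp p.1)
            * (X + ((p.2+1 : ℕ) : S)) ^ (p.2+1)
        - ((N+2 : ℕ) : S) * (C ((((N+1).choose (p.1+1) : ℕ) : Polynomial ℚ) * xp p.1)
            * (X + C 1 + (p.2 : S)) ^ p.2) := by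
    intro p hp
    have hij : p.1 + p.2 = N := Finset.HasAntidiagonal.mem_antidiagonal.mp hp
    have hbase : (X + ((p.2+1 : ℕ) : S)) = (X + C 1 + (p.2 : S)) := by
      rw [C_1]; push_cast; ring
    have hX : (X : S) = (X + ((p.2+1 : ℕ) : S)) - ((p.2+1 : ℕ) : S) := by ring
    have hn : ((p.2+1 : ℕ) : Polynomial ℚ) * (((N+2).choose (p.1+1) : ℕ) : Polynomial ℚ)
        = ((N+2 : ℕ) : Polynomial ℚ) * (((N+1).choose (p.1+1) : ℕ) : Polynomial ℚ) := by
      rw [← Nat.cast_mul, ← Nat.cast_mul]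
      congr 1
      rw [mul_comm]
      exact chooseId hij
    have hcast : ((p.2+1 : ℕ) : S) * C ((((N+2).choose (p.1+1) : ℕ) : Polynomial ℚ) * xp p.1)
        = ((N+2 : ℕ) : S) * C ((((N+1).choose (p.1+1) : ℕ) : Polynomial ℚ) * xp p.1) := by
      rw [← map_natCast (C : Polynomial ℚ →+* S) (p.2+1),
        ← map_natCast (C : Polynomial ℚ →+* S) (N+2), ← map_mul, ← map_mul,
        ← mul_assoc, ← mul_assoc, hn]
    calc C ((((N+2).choose (p.1+1) : ℕ) : Polynomial ℚ) * xp p.1)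
          * (X * (X + ((p.2+1 : ℕ) : S)) ^ p.2)
        = C ((((N+2).choose (p.1+1) : ℕ) : Polynomial ℚ) * xp p.1)
            * (X + ((p.2+1 : ℕ) : S)) ^ (p.2+1)
          - (((p.2+1 : ℕ) : S) * C ((((N+2).choose (p.1+1) : ℕ) : Polynomial ℚ) * xp p.1))
            * (X + ((p.2+1 : ℕ) : S)) ^ p.2 := by
          rw [pow_succ]
          ring
      _ = _ := by
          rw [hcast, hbase]
          ring
  rw [Finset.sum_congr rfl hsplit, Finset.sum_sub_distrib, ← Finset.mul_sum, S1eq, S2eq]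
  simp only [C_1]
  push_cast
  ring

lemma coeff_one_X_mul {R : Type*} [Semiring R] (q : Polynomial R) :
    (Polynomial.X * q).coeff 1 = q.coeff 0 := Polynomial.coeff_X_mul q 0

lemma coeff_zero_X_add_C_pow {R : Type*} [CommSemiring R] (a : R) (m : ℕ) :
    ((Polynomial.X + C a) ^ m).coeff 0 = a ^ m := by
  rw [coeff_X_add_C_pow]
  simp

lemma coeff_one_X_add_C_pow {R : Type*} [CommSemiring R] (a : R) (m : ℕ) :
    ((Polynomial.X + C a) ^ (m+1)).coeff 1 = a ^ m * (m+1 : ℕ) := by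
  rw [coeff_X_add_C_pow]
  simp

lemma hA (N : ℕ) :
    (((N+2 : ℕ) : Polynomial ℚ))^(N+1)
      + ∑ p ∈ antidiagonal N, (((N+2).choose (p.1+1) : ℕ) : Polynomial ℚ) * xp p.1
          * (((p.2+1 : ℕ) : Polynomial ℚ))^p.2
    = ((N+1 : ℕ) : Polynomial ℚ)
        * (Polynomial.X * (Polynomial.X + C ((N+2 : ℕ) : ℚ))^N)
      + (Polynomial.X + C ((N+2 : ℕ) : ℚ))^(N+1) := by
  have hc2 : ((N+2 : ℕ) : S) = C (((N+2 : ℕ) : Polynomial ℚ)) := (map_natCast C _).symm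
  have e1 : (C (xp (N+1)) + X * (X + ((N+2 : ℕ) : S)) ^ (N+1)
      + ∑ p ∈ antidiagonal N, C ((((N+2).choose (p.1+1) : ℕ) : Polynomial ℚ) * xp p.1)
          * (X * (X + ((p.2+1 : ℕ) : S)) ^ p.2)).coeff 1
      = (((N+2 : ℕ) : Polynomial ℚ))^(N+1)
        + ∑ p ∈ antidiagonal N, (((N+2).choose (p.1+1) : ℕ) : Polynomial ℚ) * xp p.1
            * (((p.2+1 : ℕ) : Polynomial ℚ))^p.2 := by
    rw [coeff_add, coeff_add, finset_sum_coeff]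
    rw [hc2, coeff_one_X_mul, coeff_zero_X_add_C_pow]
    have hterm : ∀ p ∈ antidiagonal N,
        (C ((((N+2).choose (p.1+1) : ℕ) : Polynomial ℚ) * xp p.1)
          * (X * (X + ((p.2+1 : ℕ) : S)) ^ p.2)).coeff 1
        = (((N+2).choose (p.1+1) : ℕ) : Polynomial ℚ) * xp p.1
            * (((p.2+1 : ℕ) : Polynomial ℚ))^p.2 := by
      intro p _
      have hcj : ((p.2+1 : ℕ) : S) = C (((p.2+1 : ℕ) : Polynomial ℚ)) := (map_natCast C _).symm
      rw [coeff_C_mul, hcj, coeff_one_X_mul, coeff_zero_X_add_C_pow]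
    rw [Finset.sum_congr rfl hterm]
    simp [coeff_C]
  have e2 : (((C (Polynomial.X : Polynomial ℚ) + X)
      * (C (Polynomial.X : Polynomial ℚ) + X + ((N+2 : ℕ) : S)) ^ (N+1)) : S).coeff 1
      = ((N+1 : ℕ) : Polynomial ℚ)
          * (Polynomial.X * (Polynomial.X + C ((N+2 : ℕ) : ℚ))^N)
        + (Polynomial.X + C ((N+2 : ℕ) : ℚ))^(N+1) := by
    have hb : (C (Polynomial.X : Polynomial ℚ) + X + ((N+2 : ℕ) : S))
        = X + C (Polynomial.X + C ((N+2 : ℕ) : ℚ)) := by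
      rw [hc2, map_add]
      have : ((N+2 : ℕ) : Polynomial ℚ) = C ((N+2 : ℕ) : ℚ) := (map_natCast C _).symm
      rw [this]
      ring
    rw [hb, add_mul, coeff_add, coeff_C_mul, coeff_one_X_add_C_pow, coeff_one_X_mul,
      coeff_zero_X_add_C_pow]
    have : ((N+2 : ℕ) : Polynomial ℚ) = C ((N+2 : ℕ) : ℚ) := (map_natCast C _).symm
    push_cast
    ring
  rw [← e1, H2 N, e2]

lemma cayley (N : ℕ) :
    ∑ p ∈ antidiagonal N, (((N+2).choose (p.1+1) : ℕ) : ℚ)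
        * (((p.1+1 : ℕ) : ℚ))^p.1 * (((p.2+1 : ℕ) : ℚ))^p.2
      = 2 * ((N+1 : ℕ) : ℚ) * (((N+2 : ℕ) : ℚ))^N := by
  have h := hA N
  have e1 : ((((N+2 : ℕ) : Polynomial ℚ))^(N+1)
      + ∑ p ∈ antidiagonal N, (((N+2).choose (p.1+1) : ℕ) : Polynomial ℚ) * xp p.1
          * (((p.2+1 : ℕ) : Polynomial ℚ))^p.2).coeff 1
      = ∑ p ∈ antidiagonal N, (((N+2).choose (p.1+1) : ℕ) : ℚ)
          * (((p.1+1 : ℕ) : ℚ))^p.1 * (((p.2+1 : ℕ) : ℚ))^p.2 := by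
    rw [coeff_add, finset_sum_coeff]
    have h0 : ((((N+2 : ℕ) : Polynomial ℚ))^(N+1)).coeff 1 = 0 := by
      rw [show ((N+2 : ℕ) : Polynomial ℚ) = C ((N+2 : ℕ) : ℚ) from (map_natCast C _).symm,
        ← map_pow, coeff_C]
      norm_num
    have hterm : ∀ p ∈ antidiagonal N,
        ((((N+2).choose (p.1+1) : ℕ) : Polynomial ℚ) * xp p.1
          * (((p.2+1 : ℕ) : Polynomial ℚ))^p.2).coeff 1
        = (((N+2).choose (p.1+1) : ℕ) : ℚ)
            * (((p.1+1 : ℕ) : ℚ))^p.1 * (((p.2+1 : ℕ) : ℚ))^p.2 := by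
      intro p _
      have hre : (((N+2).choose (p.1+1) : ℕ) : Polynomial ℚ) * xp p.1
            * (((p.2+1 : ℕ) : Polynomial ℚ))^p.2
          = C ((((N+2).choose (p.1+1) : ℕ) : ℚ) * (((p.2+1 : ℕ) : ℚ))^p.2) * xp p.1 := by
        rw [map_mul, map_pow, map_natCast C, map_natCast C]
        ring
      rw [hre, coeff_C_mul]
      have hxp : (xp p.1).coeff 1 = (((p.1+1 : ℕ) : ℚ))^p.1 := by
        unfold xp
        have : (Polynomial.X + ((p.1 : ℕ) : Polynomial ℚ) + 1)
            = Polynomial.X + C (((p.1+1 : ℕ) : ℚ)) := by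
          rw [show (C (((p.1+1 : ℕ) : ℚ)) : Polynomial ℚ)
              = (((p.1+1 : ℕ) : Polynomial ℚ)) from map_natCast C _]
          push_cast
          ring
        rw [this, coeff_one_X_mul, coeff_zero_X_add_C_pow]
      rw [hxp]
      ring
    rw [Finset.sum_congr rfl hterm, h0, zero_add]
  have e2 : (((N+1 : ℕ) : Polynomial ℚ)
        * (Polynomial.X * (Polynomial.X + C ((N+2 : ℕ) : ℚ))^N)
      + (Polynomial.X + C ((N+2 : ℕ) : ℚ))^(N+1)).coeff 1
      = 2 * ((N+1 : ℕ) : ℚ) * (((N+2 : ℕ) : ℚ))^N := by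
    rw [coeff_add,
      show (((N+1 : ℕ) : Polynomial ℚ)) = C (((N+1 : ℕ) : ℚ)) from (map_natCast C _).symm,
      coeff_C_mul, coeff_one_X_mul, coeff_zero_X_add_C_pow, coeff_one_X_add_C_pow]
    push_cast
    ring
  rw [← e1, h, e2]

end Hurwitz

end Aux

open PowerSeries Finset

/-- The principal branch of the Lambert W function, as a formal power series:
`W(t) = ∑_{j≥0} (-(j+1))^j/(j+1)! · t^{j+1}`. -/
noncomputable def lambertW : PowerSeries ℚ :=
  PowerSeries.mk fun n => if n = 0 then 0 else (-(n : ℚ)) ^ (n - 1) / (Nat.factorial n : ℚ)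

/-- The formal exponential of a power series `f` with zero constant term:
the coefficient of `t^n` in `exp f` is `∑_{ℓ=0}^{n} (coeff of t^n in f^ℓ)/ℓ!`
(the sum is finite since `f^ℓ` has order `≥ ℓ`). -/
noncomputable def formalExp (f : PowerSeries ℚ) : PowerSeries ℚ :=
  PowerSeries.mk fun n =>
    ∑ ℓ ∈ Finset.range (n + 1), (PowerSeries.coeff (R := ℚ) n (f ^ ℓ)) / (Nat.factorial ℓ : ℚ)

lemma coeffW (n : ℕ) : PowerSeries.coeff (n+1) lambertW = (-(n+1 : ℚ))^n / ((n+1).factorial : ℚ) := by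
  simp [lambertW, coeff_mk]

lemma constW : PowerSeries.constantCoeff lambertW = 0 := by
  simp [lambertW, ← coeff_zero_eq_constantCoeff]

lemma coeffW_one : PowerSeries.coeff 1 lambertW = 1 := by
  have := coeffW 0
  norm_num at this
  exact this

lemma ordW {j ℓ : ℕ} (h : j < ℓ) : PowerSeries.coeff j (lambertW ^ ℓ) = 0 := by
  have hdvd : (PowerSeries.X : PowerSeries ℚ)^ℓ ∣ lambertW^ℓ :=
    pow_dvd_pow_of_dvd (PowerSeries.X_dvd_iff.mpr constW) ℓ
  exact PowerSeries.X_pow_dvd_iff.mp hdvd j h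

lemma quadW (M : ℕ) :
    ∑ p ∈ antidiagonal M,
        (PowerSeries.coeff (p.1+1) lambertW) * (PowerSeries.coeff (p.2+1) lambertW)
      = (-1)^M * 2 * ((M+1 : ℕ) : ℚ) * (((M+2 : ℕ) : ℚ))^M / ((M+2).factorial : ℚ) := by
  have hterm : ∀ p ∈ antidiagonal M,
      (PowerSeries.coeff (p.1+1) lambertW) * (PowerSeries.coeff (p.2+1) lambertW)
      = (-1)^M * ((((M+2).choose (p.1+1) : ℕ) : ℚ)
          * (((p.1+1 : ℕ) : ℚ))^p.1 * (((p.2+1 : ℕ) : ℚ))^p.2) / ((M+2).factorial : ℚ) := by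
    intro p hp
    have hij : p.1 + p.2 = M := Finset.HasAntidiagonal.mem_antidiagonal.mp hp
    rw [coeffW, coeffW]
    have hfac : (((M+2).choose (p.1+1) : ℕ) : ℚ) * ((p.1+1).factorial : ℚ)
        * ((p.2+1).factorial : ℚ) = ((M+2).factorial : ℚ) := by
      rw [← Nat.cast_mul, ← Nat.cast_mul]
      congr 1
      have h1 : p.1 + 1 ≤ M + 2 := by omega
      have := Nat.choose_mul_factorial_mul_factorial h1
      rw [show M + 2 - (p.1+1) = p.2+1 by omega] at this
      rw [← this]
    have hne1 : ((p.1+1).factorial : ℚ) ≠ 0 := by positivity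
    have hne2 : ((p.2+1).factorial : ℚ) ≠ 0 := by positivity
    have hne3 : (((M+2).factorial : ℕ) : ℚ) ≠ 0 := by positivity
    have hsgn : (-(p.1+1 : ℚ))^p.1 * (-(p.2+1 : ℚ))^p.2
        = (-1)^M * (((p.1+1 : ℕ) : ℚ))^p.1 * (((p.2+1 : ℕ) : ℚ))^p.2 := by
      rw [show (-(p.1+1:ℚ)) = (-1) * ((p.1+1:ℕ):ℚ) by push_cast; ring,
        show (-(p.2+1:ℚ)) = (-1) * ((p.2+1:ℕ):ℚ) by push_cast; ring,
        mul_pow, mul_pow, ← hij]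
      push_cast
      ring
    rw [div_mul_div_comm, hsgn, div_eq_div_iff (by positivity) (by positivity), ← hfac]
    ring
  rw [Finset.sum_congr rfl hterm, ← Finset.sum_div, ← Finset.mul_sum, Finset.sum_congr rfl
    (fun p hp => rfl)]
  rw [cayley]
  ring

lemma odeW : PowerSeries.X * (d⁄dX ℚ lambertW)
    + PowerSeries.X * (lambertW * d⁄dX ℚ lambertW) = lambertW := by
  ext n
  cases n with
  | zero =>
    simp only [map_add, PowerSeries.coeff_zero_X_mul, add_zero, zero_add]
    simp [lambertW]
  | succ m =>
    rw [map_add, coeff_succ_X_mul, coeff_succ_X_mul, coeff_derivative]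
    cases m with
    | zero =>
      rw [PowerSeries.coeff_mul]
      simp [coeffW_one]
      exact Or.inl constW
    | succ M =>
      rw [PowerSeries.coeff_mul, Finset.Nat.antidiagonal_succ, Finset.sum_cons]
      rw [coeff_zero_eq_constantCoeff_apply, constW, zero_mul, zero_add, Finset.sum_map]
      simp only [Function.Embedding.coe_prodMap, Function.Embedding.coeFn_mk,
        Function.Embedding.refl_apply, Prod.map_fst, Prod.map_snd, Prod.map_apply, id_eq,
        Nat.succ_eq_add_one]
      have hterm : ∀ p ∈ antidiagonal M,
          (PowerSeries.coeff (p.1+1)) lambertW * (PowerSeries.coeff p.2) (d⁄dX ℚ lambertW)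
          = (PowerSeries.coeff (p.1+1)) lambertW * (PowerSeries.coeff (p.2+1)) lambertW
              * ((p.2+1 : ℕ) : ℚ) := by
        intro p _
        rw [coeff_derivative]
        push_cast
        ring
      rw [Finset.sum_congr rfl hterm]
      set T := ∑ p ∈ antidiagonal M,
        (PowerSeries.coeff (p.1+1)) lambertW * (PowerSeries.coeff (p.2+1)) lambertW
          * ((p.2+1 : ℕ) : ℚ) with hT
      have hswapgen : ∀ (g : ℕ × ℕ → ℚ),
          ∑ p ∈ antidiagonal M, g p = ∑ p ∈ antidiagonal M, g p.swap := by
        intro g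
        conv_lhs => rw [← Finset.HasAntidiagonal.map_swap_antidiagonal]
        rw [Finset.sum_map]
        simp only [Function.Embedding.coeFn_mk]
      have hswap : T = ∑ p ∈ antidiagonal M,
          (PowerSeries.coeff (p.2+1)) lambertW * (PowerSeries.coeff (p.1+1)) lambertW
            * ((p.1+1 : ℕ) : ℚ) := by
        rw [hT]
        exact hswapgen (fun p =>
          (PowerSeries.coeff (p.1+1)) lambertW * (PowerSeries.coeff (p.2+1)) lambertW
            * ((p.2+1 : ℕ) : ℚ))
      have h2T : T + T = ((M+2 : ℕ) : ℚ) * ∑ p ∈ antidiagonal M,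
          (PowerSeries.coeff (p.1+1)) lambertW * (PowerSeries.coeff (p.2+1)) lambertW := by
        nth_rewrite 2 [hswap]
        rw [hT, ← Finset.sum_add_distrib, Finset.mul_sum]
        apply Finset.sum_congr rfl
        intro p hp
        have hij : p.1 + p.2 = M := Finset.HasAntidiagonal.mem_antidiagonal.mp hp
        have : ((p.2+1 : ℕ) : ℚ) + ((p.1+1 : ℕ) : ℚ) = ((M+2 : ℕ) : ℚ) := by
          push_cast
          rw [show (M : ℚ) = ((p.1 + p.2 : ℕ) : ℚ) by rw [hij]]
          push_cast
          ring
        rw [← this]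
        ring
      rw [quadW M] at h2T
      have hTval : T = (-1)^M * ((M+1 : ℕ) : ℚ) * (((M+2 : ℕ) : ℚ))^(M+1)
          / ((M+2).factorial : ℚ) := by
        have hfne : ((M+2).factorial : ℚ) ≠ 0 := by positivity
        field_simp at h2T ⊢
        rw [pow_succ]
        linarith [h2T]
      rw [hTval, coeffW (M+1)]
      simp only [show M+1+1 = M+2 from rfl]
      have hfne : (((M+2).factorial : ℕ) : ℚ) ≠ 0 := by positivity
      have hsgn : (-((M+1 : ℚ)+1))^(M+1) = (-1)^M * (-1) * (((M+2:ℕ)):ℚ)^(M+1) := by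
        rw [show (-((M+1:ℚ)+1)) = (-1) * (((M+2):ℕ):ℚ) by push_cast; ring, mul_pow, pow_succ]
        all_goals ring
      push_cast at hsgn ⊢
      rw [hsgn]
      field_simp
      all_goals ring

lemma coeffExpand (k : ℕ) : PowerSeries.coeff k (formalExp lambertW)
    = ∑ ℓ ∈ range (k+1), PowerSeries.coeff k (lambertW ^ ℓ) / (ℓ.factorial : ℚ) := by
  simp [formalExp]

lemma derivExp : d⁄dX ℚ (formalExp lambertW) = d⁄dX ℚ lambertW * formalExp lambertW := by
  ext n
  have hder : ∀ m : ℕ, PowerSeries.coeff (n+1) (lambertW ^ (m+1)) * ((n : ℚ)+1)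
      = PowerSeries.coeff n (lambertW ^ m * d⁄dX ℚ lambertW) * ((m : ℚ)+1) := by
    intro m
    have hD : d⁄dX ℚ (lambertW ^ (m+1))
        = (m+1 : ℕ) • (lambertW ^ m • d⁄dX ℚ lambertW) := by
      have := Derivation.leibniz_pow (D := d⁄dX ℚ) (a := lambertW) (m+1)
      simpa using this
    have hc := congrArg (PowerSeries.coeff n) hD
    rw [coeff_derivative] at hc
    rw [hc]
    rw [smul_eq_mul (a := lambertW ^ m)]
    rw [map_nsmul]
    push_cast
    ring
  rw [coeff_derivative, coeffExpand (n+1), Finset.sum_mul,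
    Finset.sum_range_succ' (fun ℓ => PowerSeries.coeff (n+1) (lambertW ^ ℓ)
      / (ℓ.factorial : ℚ) * ((n : ℚ)+1))]
  have h0 : PowerSeries.coeff (n+1) (lambertW ^ 0) = 0 := by
    simp [PowerSeries.coeff_one]
  rw [h0, zero_div, zero_mul, add_zero]
  have hstep : ∀ m ∈ range (n+1),
      PowerSeries.coeff (n+1) (lambertW ^ (m+1)) / ((m+1).factorial : ℚ) * ((n : ℚ)+1)
      = PowerSeries.coeff n (lambertW ^ m * d⁄dX ℚ lambertW) / (m.factorial : ℚ) := by
    intro m _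
    have hfac : ((m+1).factorial : ℚ) = ((m : ℚ)+1) * (m.factorial : ℚ) := by
      rw [Nat.factorial_succ]
      push_cast
      ring
    have hne : (m.factorial : ℚ) ≠ 0 := by positivity
    have hne2 : ((m : ℚ)+1) ≠ 0 := by positivity
    rw [div_mul_eq_mul_div, div_eq_div_iff (by rw [hfac]; positivity) hne, hfac]
    linear_combination (m.factorial : ℚ) * hder m
  rw [Finset.sum_congr rfl hstep]
  -- now the RHS
  rw [PowerSeries.coeff_mul]
  have hin : ∀ p ∈ antidiagonal n,
      PowerSeries.coeff p.1 (d⁄dX ℚ lambertW) * PowerSeries.coeff p.2 (formalExp lambertW)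
      = ∑ ℓ ∈ range (n+1),
          PowerSeries.coeff p.1 (d⁄dX ℚ lambertW)
            * (PowerSeries.coeff p.2 (lambertW ^ ℓ) / (ℓ.factorial : ℚ)) := by
    intro p hp
    have hple : p.2 + 1 ≤ n + 1 := by
      have := Finset.HasAntidiagonal.mem_antidiagonal.mp hp; omega
    rw [coeffExpand p.2, Finset.mul_sum]
    apply Finset.sum_subset (Finset.range_subset_range.mpr hple)
    intro ℓ _ hnot
    have hgt : p.2 < ℓ := by
      simp only [Finset.mem_range] at hnot
      omega
    rw [ordW hgt]
    simp
  rw [Finset.sum_congr rfl hin, Finset.sum_comm]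
  apply Finset.sum_congr rfl
  intro ℓ _
  rw [mul_comm (lambertW ^ ℓ) (d⁄dX ℚ lambertW), PowerSeries.coeff_mul, Finset.sum_div]
  apply Finset.sum_congr rfl
  intro p _
  ring

lemma XdF : PowerSeries.X * d⁄dX ℚ (lambertW * formalExp lambertW)
    = lambertW * formalExp lambertW := by
  have hleib : d⁄dX ℚ (lambertW * formalExp lambertW)
      = lambertW * d⁄dX ℚ (formalExp lambertW) + formalExp lambertW * d⁄dX ℚ lambertW := by
    have := Derivation.leibniz (D := d⁄dX ℚ) lambertW (formalExp lambertW)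
    simpa [smul_eq_mul] using this
  rw [hleib, derivExp]
  have : PowerSeries.X * (lambertW * (d⁄dX ℚ lambertW * formalExp lambertW)
        + formalExp lambertW * d⁄dX ℚ lambertW)
      = (PowerSeries.X * d⁄dX ℚ lambertW
          + PowerSeries.X * (lambertW * d⁄dX ℚ lambertW)) * formalExp lambertW := by
    ring
  rw [this, odeW]

lemma coeffW0 : PowerSeries.coeff 0 lambertW = 0 := by simp [lambertW]

lemma coeffE0 : PowerSeries.coeff 0 (formalExp lambertW) = 1 := by
  rw [coeffExpand 0]
  simp

theorem stmt10 : lambertW * formalExp lambertW = PowerSeries.X := by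
  ext n
  match n with
  | 0 =>
    rw [PowerSeries.coeff_mul]
    simp [coeffW0]
  | 1 =>
    rw [PowerSeries.coeff_mul, Finset.Nat.antidiagonal_succ]
    simp [coeffW0, coeffW_one, coeffE0]
  | (m+2) =>
    have h := congrArg (PowerSeries.coeff (m+2)) XdF
    rw [coeff_succ_X_mul, coeff_derivative] at h
    have hne : ((m:ℚ)+1) ≠ 0 := by positivity
    have h2 : PowerSeries.coeff (m+2) (lambertW * formalExp lambertW) * ((m:ℚ)+1) = 0 := by
      push_cast at h
      linear_combination h
    rw [PowerSeries.coeff_X]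
    rw [(mul_eq_zero.mp h2).resolve_right hne]
    simp
end

section
/- For all n ≥ 3, the rank of H^2(M̄_{0,n}, ℚ) equals 2^{n-1} - (n^2 - n + 2)/2, i.e. the coefficient a_{n,1} of t in P_n satisfies a_{n,1} = 2^{n-1} - (n^2 - n + 2)/2, where a_{n,k} are determined by the recursion P_3 = 1, P_n = P_{n-1}(1+t) + t·∑_{i=3}^{n-2} C(n-2,i-1) P_i P_{n+1-i}. -/
open Polynomial Finset

lemma range_split (n : ℕ) (hn : 3 ≤ n) :
    Finset.range n = insert 0 (insert 1 (insert (n-1) (Finset.Icc 2 (n-2)))) := by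
  ext x
  simp only [Finset.mem_range, Finset.mem_insert, Finset.mem_Icc]
  omega

lemma sumchoose (n : ℕ) (hn : 3 ≤ n) :
    ∑ i ∈ Finset.Icc 3 (n-1), ((n-1).choose (i-1) : ℚ) = 2^(n-1) - (n+1) := by
  have hmap : Finset.Icc 3 (n-1) =
      Finset.map (addRightEmbedding 1) (Finset.Icc 2 (n-2)) := by
    rw [Finset.map_add_right_Icc]
    congr 1 <;> omega
  rw [hmap, Finset.sum_map]
  simp only [addRightEmbedding_apply, Nat.add_sub_cancel]
  have h1 : ∑ j ∈ Finset.range n, ((n-1).choose j : ℚ) = 2^(n-1) := by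
    have := Nat.sum_range_choose (n-1)
    have hn1 : n - 1 + 1 = n := by omega
    rw [← hn1]
    exact_mod_cast congrArg (Nat.cast : ℕ → ℚ) this
  rw [range_split n hn] at h1
  rw [Finset.sum_insert (by simp; omega), Finset.sum_insert (by simp; omega),
    Finset.sum_insert (by simp; omega)] at h1
  have hc0 : ((n-1).choose 0 : ℚ) = 1 := by simp
  have hc1 : ((n-1).choose 1 : ℚ) = n - 1 := by
    rw [Nat.choose_one_right]; push_cast [Nat.cast_sub (by omega : 1 ≤ n)]; ring
  have hcn : ((n-1).choose (n-1) : ℚ) = 1 := by simp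
  rw [hc0, hc1, hcn] at h1
  push_cast at h1 ⊢
  linarith

theorem stmt12 (P : ℕ → Polynomial ℤ)
    (h3 : P 3 = 1)
    (hrec : ∀ n, 3 < n → P n = P (n-1) * (1 + X) +
      X * ∑ i ∈ Finset.Icc 3 (n-2), ((n-2).choose (i-1) : Polynomial ℤ) * P i * P (n+1-i)) :
    ∀ n : ℕ, 3 ≤ n →
      ((P n).coeff 1 : ℚ) = 2 ^ (n - 1) - ((n : ℚ)^2 - n + 2) / 2 := by
  have hc0 : ∀ n, 3 ≤ n → (P n).coeff 0 = 1 := by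
    intro n hn
    induction n, hn using Nat.le_induction with
    | base => rw [h3]; simp
    | succ n hn ih =>
      rw [hrec (n+1) (by omega)]
      simp only [Nat.add_sub_cancel, coeff_add, mul_coeff_zero, coeff_X_zero,
        zero_mul, add_zero]
      rw [ih]
      simp
  intro n hn
  induction n, hn using Nat.le_induction with
  | base => rw [h3]; norm_num [Polynomial.coeff_one]
  | succ n hn ih =>
    rw [hrec (n+1) (by omega)]
    simp only [Nat.add_sub_cancel]
    have hkey : (P n * (1 + X) + X * ∑ i ∈ Finset.Icc 3 (n+1-2),
        ((n+1-2).choose (i-1) : Polynomial ℤ) * P i * P (n+1+1-i)).coeff 1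
        = (P n).coeff 1 + 1 + ∑ i ∈ Finset.Icc 3 (n-1), ((n-1).choose (i-1) : ℤ) := by
      have h1 : n + 1 - 2 = n - 1 := by omega
      rw [h1, coeff_add, mul_add, mul_one, coeff_add, coeff_mul_X, coeff_X_mul,
        hc0 n hn, finset_sum_coeff]
      congr 1
      apply Finset.sum_congr rfl
      intro i hi
      simp only [Finset.mem_Icc] at hi
      rw [mul_coeff_zero, mul_coeff_zero, hc0 i (by omega), hc0 (n+1+1-i) (by omega)]
      simp [Polynomial.coeff_natCast_ite]
    rw [hkey]
    push_cast
    rw [ih, sumchoose n hn]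
    have h2 : (2:ℚ)^n = 2 * 2^(n-1) := by
      rw [← pow_succ']
      congr 1
      omega
    rw [h2]
    push_cast
    ring
end

section
/- For all n ≥ 3, the coefficient a_{n,2} of t^2 in P_n (equal to rk H^4(M̄_{0,n})) satisfies a_{n,2} = (1/2)·3^n - ((n^2 + 3n + 4)/8)·2^n + (3n^4 - 10n^3 + 33n^2 - 26n + 12)/24, where P_n is determined by the recursion P_3 = 1, P_n = P_{n-1}(1+t) + t·∑_{i=3}^{n-2} C(n-2,i-1) P_i P_{n+1-i}. -/
open Polynomial Finset

/-- coefficient 1 of a product -/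
lemma aux_coeff_mul_one (p q : Polynomial ℤ) :
    (p * q).coeff 1 = p.coeff 0 * q.coeff 1 + p.coeff 1 * q.coeff 0 := by
  rw [Polynomial.coeff_mul, Finset.Nat.sum_antidiagonal_eq_sum_range_succ_mk,
    Finset.sum_range_succ, Finset.sum_range_one]

lemma sumL1g (m : ℕ) : ∑ j ∈ range (m+1), (m.choose j : ℚ) = 2^m := by
  exact_mod_cast Nat.sum_range_choose m

lemma sumL2g (m : ℕ) : ∑ j ∈ range (m+1), (m.choose j : ℚ) * 2^j = 3^m := by
  calc ∑ j ∈ range (m+1), (m.choose j : ℚ) * 2^j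
      = ∑ j ∈ range (m+1), (2:ℚ)^j * 1^(m-j) * (m.choose j : ℚ) := by
        refine Finset.sum_congr rfl fun j _ => by ring
    _ = (2+1:ℚ)^m := (add_pow 2 1 m).symm
    _ = 3^m := by norm_num

lemma sumL3g (m : ℕ) : ∑ j ∈ range (m+2), ((m+1).choose j : ℚ) * j = ((m+1 : ℕ) : ℚ) * 2^m := by
  rw [Finset.sum_range_succ']
  have e : ∀ j ∈ range (m+1), ((m+1).choose (j+1) : ℚ) * ((j+1 : ℕ) : ℚ)
      = ((m+1 : ℕ) : ℚ) * (m.choose j : ℚ) := by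
    intro j _
    exact_mod_cast (Nat.add_one_mul_choose_eq m j).symm
  rw [Finset.sum_congr rfl e, ← Finset.mul_sum, sumL1g m]
  simp

lemma sumL4g (m : ℕ) : ∑ j ∈ range (m+3), ((m+2).choose j : ℚ) * j * ((j:ℚ) - 1)
    = ((m+2 : ℕ) : ℚ) * ((m+1 : ℕ) : ℚ) * 2^m := by
  rw [Finset.sum_range_succ']
  have e : ∀ j ∈ range (m+2), ((m+2).choose (j+1) : ℚ) * ((j+1 : ℕ) : ℚ) * (((j+1 : ℕ) : ℚ) - 1)
      = ((m+2 : ℕ) : ℚ) * (((m+1).choose j : ℚ) * j) := by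
    intro j _
    have h' : ((m+2).choose (j+1) : ℚ) * ((j+1 : ℕ) : ℚ)
        = ((m+2 : ℕ) : ℚ) * ((m+1).choose j : ℚ) := by
      exact_mod_cast (Nat.add_one_mul_choose_eq (m+1) j).symm
    push_cast at h' ⊢
    nlinarith [h']
  rw [Finset.sum_congr rfl e, ← Finset.mul_sum, sumL3g m]
  push_cast
  ring

section Keys

variable (k : ℕ)

lemma key1 : ∑ j ∈ range k, ((k+2).choose (j+2) : ℚ) = 2^(k+2) - ((k:ℚ)+4) := by
  set g : ℕ → ℚ := fun j => ((k+2).choose j : ℚ) with hg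
  have h1 : ∑ j ∈ range (k+3), g j = 2^(k+2) := sumL1g (k+2)
  have h5 : ∑ j ∈ range (k+3), g j = ∑ j ∈ range (k+2), g (j+1) + g 0 :=
    Finset.sum_range_succ' g (k+2)
  have h6 : ∑ j ∈ range (k+2), g (j+1) = ∑ j ∈ range (k+1), g (j+2) + g 1 :=
    Finset.sum_range_succ' (fun j => g (j+1)) (k+1)
  have h7 : ∑ j ∈ range (k+1), g (j+2) = ∑ j ∈ range k, g (j+2) + g (k+2) :=
    Finset.sum_range_succ (fun j => g (j+2)) k
  have hg0 : g 0 = 1 := by simp [hg]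
  have hg1 : g 1 = (k:ℚ)+2 := by
    show ((k+2).choose 1 : ℚ) = _
    rw [Nat.choose_one_right]
    push_cast
    ring
  have hgk : g (k+2) = 1 := by simp [hg]
  have : ∑ j ∈ range k, g (j+2) = 2^(k+2) - ((k:ℚ)+4) := by linarith
  exact this

lemma keyA : ∑ j ∈ range k, ((k+2).choose (j+2) : ℚ) *
      (2^(j+2) - ((j:ℚ)+3)*((j:ℚ)+2)/2 - 1)
    = 3^(k+2) - ((k:ℚ)+2)*((k:ℚ)+1)*2^k/2 - ((k:ℚ)+2)*2^(k+1) - 2^(k+2)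
      - (2^(k+2) - ((k:ℚ)+3)*((k:ℚ)+2)/2 - 1) := by
  set g : ℕ → ℚ := fun j => ((k+2).choose j : ℚ) * (2^j - ((j:ℚ)+1)*(j:ℚ)/2 - 1) with hg
  have h1 : ∑ j ∈ range (k+3), ((k+2).choose j : ℚ) = 2^(k+2) := sumL1g (k+2)
  have h2 : ∑ j ∈ range (k+3), ((k+2).choose j : ℚ) * 2^j = 3^(k+2) := sumL2g (k+2)
  have h3 : ∑ j ∈ range (k+3), ((k+2).choose j : ℚ) * j = ((k+2 : ℕ) : ℚ) * 2^(k+1) :=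
    sumL3g (k+1)
  have h4 : ∑ j ∈ range (k+3), ((k+2).choose j : ℚ) * j * ((j:ℚ) - 1)
      = ((k+2 : ℕ) : ℚ) * ((k+1 : ℕ) : ℚ) * 2^k := sumL4g k
  have full : ∑ j ∈ range (k+3), g j
      = 3^(k+2) - ((k:ℚ)+2)*((k:ℚ)+1)*2^k/2 - ((k:ℚ)+2)*2^(k+1) - 2^(k+2) := by
    have e : ∀ j ∈ range (k+3), g j
        = ((k+2).choose j : ℚ) * 2^j - (((k+2).choose j : ℚ) * j * ((j:ℚ) - 1))/2
          - ((k+2).choose j : ℚ) * j - ((k+2).choose j : ℚ) := by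
      intro j _; simp only [hg]; ring
    rw [Finset.sum_congr rfl e, Finset.sum_sub_distrib, Finset.sum_sub_distrib,
      Finset.sum_sub_distrib, ← Finset.sum_div, h1, h2, h3, h4]
    push_cast; ring
  have h5 : ∑ j ∈ range (k+3), g j = ∑ j ∈ range (k+2), g (j+1) + g 0 :=
    Finset.sum_range_succ' g (k+2)
  have h6 : ∑ j ∈ range (k+2), g (j+1) = ∑ j ∈ range (k+1), g (j+2) + g 1 :=
    Finset.sum_range_succ' (fun j => g (j+1)) (k+1)
  have h7 : ∑ j ∈ range (k+1), g (j+2) = ∑ j ∈ range k, g (j+2) + g (k+2) :=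
    Finset.sum_range_succ (fun j => g (j+2)) k
  have hg0 : g 0 = 0 := by simp [hg]
  have hg1 : g 1 = 0 := by norm_num [hg]
  have hgk : g (k+2) = 2^(k+2) - ((k:ℚ)+3)*((k:ℚ)+2)/2 - 1 := by
    simp only [hg, Nat.choose_self, Nat.cast_one, one_mul]
    push_cast; ring
  have e2 : ∀ j ∈ range k, ((k+2).choose (j+2) : ℚ) *
      (2^(j+2) - ((j:ℚ)+3)*((j:ℚ)+2)/2 - 1) = g (j+2) := by
    intro j _; simp only [hg]; push_cast; ring
  rw [Finset.sum_congr rfl e2]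
  linarith

lemma keyB : ∑ j ∈ range k, ((k+2).choose (j+1) : ℚ) *
      (2^(j+2) - ((j:ℚ)+3)*((j:ℚ)+2)/2 - 1)
    = 2*3^(k+2) - ((k:ℚ)+2)*((k:ℚ)+1)*2^k/2 - 2*((k:ℚ)+2)*2^(k+1) - 2*2^(k+2)
      - ((k:ℚ)+2) * (2^(k+2) - ((k:ℚ)+3)*((k:ℚ)+2)/2 - 1)
      - (2^(k+3) - ((k:ℚ)+4)*((k:ℚ)+3)/2 - 1) := by
  set g : ℕ → ℚ :=
    fun j => ((k+2).choose j : ℚ) * (2^(j+1) - ((j:ℚ)+2)*((j:ℚ)+1)/2 - 1) with hg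
  have h1 : ∑ j ∈ range (k+3), ((k+2).choose j : ℚ) = 2^(k+2) := sumL1g (k+2)
  have h2 : ∑ j ∈ range (k+3), ((k+2).choose j : ℚ) * 2^j = 3^(k+2) := sumL2g (k+2)
  have h3 : ∑ j ∈ range (k+3), ((k+2).choose j : ℚ) * j = ((k+2 : ℕ) : ℚ) * 2^(k+1) :=
    sumL3g (k+1)
  have h4 : ∑ j ∈ range (k+3), ((k+2).choose j : ℚ) * j * ((j:ℚ) - 1)
      = ((k+2 : ℕ) : ℚ) * ((k+1 : ℕ) : ℚ) * 2^k := sumL4g k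
  have full : ∑ j ∈ range (k+3), g j
      = 2*3^(k+2) - ((k:ℚ)+2)*((k:ℚ)+1)*2^k/2 - 2*((k:ℚ)+2)*2^(k+1) - 2*2^(k+2) := by
    have e : ∀ j ∈ range (k+3), g j
        = 2*(((k+2).choose j : ℚ) * 2^j) - (((k+2).choose j : ℚ) * j * ((j:ℚ) - 1))/2
          - 2*(((k+2).choose j : ℚ) * j) - 2*((k+2).choose j : ℚ) := by
      intro j _; simp only [hg]; ring
    rw [Finset.sum_congr rfl e, Finset.sum_sub_distrib, Finset.sum_sub_distrib,
      Finset.sum_sub_distrib, ← Finset.sum_div, ← Finset.mul_sum, ← Finset.mul_sum,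
      ← Finset.mul_sum, h1, h2, h3, h4]
    push_cast; ring
  have h5 : ∑ j ∈ range (k+3), g j = ∑ j ∈ range (k+2), g (j+1) + g 0 :=
    Finset.sum_range_succ' g (k+2)
  have h6 : ∑ j ∈ range (k+2), g (j+1) = ∑ j ∈ range (k+1), g (j+1) + g (k+2) :=
    Finset.sum_range_succ (fun j => g (j+1)) (k+1)
  have h7 : ∑ j ∈ range (k+1), g (j+1) = ∑ j ∈ range k, g (j+1) + g (k+1) :=
    Finset.sum_range_succ (fun j => g (j+1)) k
  have hg0 : g 0 = 0 := by norm_num [hg]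
  have hgk1 : g (k+1) = ((k:ℚ)+2) * (2^(k+2) - ((k:ℚ)+3)*((k:ℚ)+2)/2 - 1) := by
    have hc : (k+2).choose (k+1) = k+2 := by
      rw [show k+1 = (k+2)-1 from rfl, Nat.choose_symm (by omega : 1 ≤ k+2),
        Nat.choose_one_right]
    simp only [hg, hc]
    push_cast
    ring
  have hgk2 : g (k+2) = 2^(k+3) - ((k:ℚ)+4)*((k:ℚ)+3)/2 - 1 := by
    simp only [hg, Nat.choose_self, Nat.cast_one, one_mul]
    push_cast; ring
  have e2 : ∀ j ∈ range k, ((k+2).choose (j+1) : ℚ) *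
      (2^(j+2) - ((j:ℚ)+3)*((j:ℚ)+2)/2 - 1) = g (j+1) := by
    intro j _; simp only [hg]; push_cast; ring
  rw [Finset.sum_congr rfl e2]
  linarith

end Keys

section PLemmas

variable (P : ℕ → Polynomial ℤ)
variable (h3 : P 3 = 1)
variable (hrec : ∀ n, 3 < n → P n = P (n-1) * (1 + X) +
      X * ∑ i ∈ Finset.Icc 3 (n-2), ((n-2).choose (i-1) : Polynomial ℤ) * P i * P (n+1-i))

include h3 hrec

lemma pc0 : ∀ k : ℕ, (P (k+3)).coeff 0 = 1 := by
  intro k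
  induction k with
  | zero => simp [h3]
  | succ k ih =>
    have hr := hrec (k+4) (by omega)
    rw [show k+4-1 = k+3 from rfl, show k+4-2 = k+2 from rfl] at hr
    rw [show k+1+3 = k+4 from rfl, hr]
    simp [Polynomial.mul_coeff_zero, ih]

lemma pc1 : ∀ k : ℕ, ((P (k+3)).coeff 1 : ℚ)
    = 2^(k+2) - ((k:ℚ)+3)*((k:ℚ)+2)/2 - 1 := by
  intro k
  induction k with
  | zero => norm_num [h3, Polynomial.coeff_one]
  | succ k ih =>
    have hr := hrec (k+4) (by omega)
    rw [show k+4-1 = k+3 from rfl, show k+4-2 = k+2 from rfl,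
      show k+4+1 = k+5 from rfl] at hr
    have e1 : (∑ i ∈ Icc 3 (k+2), ((k+2).choose (i-1) : Polynomial ℤ) * P i * P (k+5-i)).coeff 0
        = ∑ j ∈ range k, ((k+2).choose (j+2) : ℤ) := by
      rw [Polynomial.finset_sum_coeff, ← Finset.Ico_add_one_right_eq_Icc, Finset.sum_Ico_eq_sum_range,
        show k+2+1-3 = k from rfl]
      refine Finset.sum_congr rfl fun j hj => ?_
      have hj' : j < k := Finset.mem_range.mp hj
      rw [show 3+j = j+3 from by omega, show j+3-1 = j+2 from by omega,
        show k+5-(j+3) = (k-1-j)+3 from by omega]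
      rw [Polynomial.mul_coeff_zero, Polynomial.mul_coeff_zero,
        pc0 P h3 hrec j, pc0 P h3 hrec (k-1-j)]
      simp
    have hz : (P (k+4)).coeff 1
        = (P (k+3)).coeff 1 + 1 + ∑ j ∈ range k, ((k+2).choose (j+2) : ℤ) := by
      rw [hr, Polynomial.coeff_add, mul_add, mul_one, Polynomial.coeff_add,
        Polynomial.coeff_mul_X, Polynomial.coeff_X_mul, e1, pc0 P h3 hrec k]
    have hq : ((P (k+4)).coeff 1 : ℚ)
        = ((P (k+3)).coeff 1 : ℚ) + 1 + ∑ j ∈ range k, ((k+2).choose (j+2) : ℚ) := by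
      exact_mod_cast congrArg (fun z : ℤ => (z : ℚ)) hz
    rw [show k+1+3 = k+4 from rfl, hq, ih, key1 k]
    push_cast
    ring

lemma pc2 : ∀ k : ℕ, ((P (k+3)).coeff 2 : ℚ)
    = (1/2) * 3^(k+3) - (((k:ℚ)+3)^2 + 3*((k:ℚ)+3) + 4)/8 * 2^(k+3)
      + (3*((k:ℚ)+3)^4 - 10*((k:ℚ)+3)^3 + 33*((k:ℚ)+3)^2 - 26*((k:ℚ)+3) + 12)/24 := by
  intro k
  induction k with
  | zero => norm_num [h3, Polynomial.coeff_one]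
  | succ k ih =>
    have hr := hrec (k+4) (by omega)
    rw [show k+4-1 = k+3 from rfl, show k+4-2 = k+2 from rfl,
      show k+4+1 = k+5 from rfl] at hr
    -- coefficient 1 of the sum
    have e1 : (∑ i ∈ Icc 3 (k+2), ((k+2).choose (i-1) : Polynomial ℤ) * P i * P (k+5-i)).coeff 1
        = ∑ j ∈ range k, ((k+2).choose (j+2) : ℤ) *
            ((P (j+3)).coeff 0 * (P ((k-1-j)+3)).coeff 1
              + (P (j+3)).coeff 1 * (P ((k-1-j)+3)).coeff 0) := by
      rw [Polynomial.finset_sum_coeff, ← Finset.Ico_add_one_right_eq_Icc, Finset.sum_Ico_eq_sum_range,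
        show k+2+1-3 = k from rfl]
      refine Finset.sum_congr rfl fun j hj => ?_
      have hj' : j < k := Finset.mem_range.mp hj
      rw [show 3+j = j+3 from by omega, show j+3-1 = j+2 from by omega,
        show k+5-(j+3) = (k-1-j)+3 from by omega]
      rw [mul_assoc, ← Polynomial.C_eq_natCast, Polynomial.coeff_C_mul, aux_coeff_mul_one]
    have e2 : ((∑ i ∈ Icc 3 (k+2),
          ((k+2).choose (i-1) : Polynomial ℤ) * P i * P (k+5-i)).coeff 1 : ℚ)
        = ∑ j ∈ range k, ((k+2).choose (j+2) : ℚ) *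
            ((2^((k-1-j)+2) - (((k-1-j : ℕ) : ℚ)+3)*(((k-1-j : ℕ) : ℚ)+2)/2 - 1)
              + (2^(j+2) - ((j:ℚ)+3)*((j:ℚ)+2)/2 - 1)) := by
      rw [e1]
      push_cast
      refine Finset.sum_congr rfl fun j hj => ?_
      rw [pc0 P h3 hrec j, pc0 P h3 hrec (k-1-j), pc1 P h3 hrec j, pc1 P h3 hrec (k-1-j)]
      push_cast
      ring
    -- split the sum into the two pieces
    have esplit : ∑ j ∈ range k, ((k+2).choose (j+2) : ℚ) *
            ((2^((k-1-j)+2) - (((k-1-j : ℕ) : ℚ)+3)*(((k-1-j : ℕ) : ℚ)+2)/2 - 1)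
              + (2^(j+2) - ((j:ℚ)+3)*((j:ℚ)+2)/2 - 1))
        = (∑ j ∈ range k, ((k+2).choose (j+2) : ℚ) *
            (2^((k-1-j)+2) - (((k-1-j : ℕ) : ℚ)+3)*(((k-1-j : ℕ) : ℚ)+2)/2 - 1))
          + ∑ j ∈ range k, ((k+2).choose (j+2) : ℚ) *
            (2^(j+2) - ((j:ℚ)+3)*((j:ℚ)+2)/2 - 1) := by
      rw [← Finset.sum_add_distrib]
      exact Finset.sum_congr rfl fun j _ => by ring
    -- reflect the first piece
    have erefl : ∑ j ∈ range k, ((k+2).choose (j+2) : ℚ) *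
            (2^((k-1-j)+2) - (((k-1-j : ℕ) : ℚ)+3)*(((k-1-j : ℕ) : ℚ)+2)/2 - 1)
        = ∑ j ∈ range k, ((k+2).choose (j+1) : ℚ) *
            (2^(j+2) - ((j:ℚ)+3)*((j:ℚ)+2)/2 - 1) := by
      have hrefl := Finset.sum_range_reflect
        (fun j => ((k+2).choose (j+1) : ℚ) * (2^(j+2) - ((j:ℚ)+3)*((j:ℚ)+2)/2 - 1)) k
      rw [← hrefl]
      refine Finset.sum_congr rfl fun j hj => ?_
      have hj' : j < k := Finset.mem_range.mp hj
      rw [show (k-1-j)+1 = (k+2)-(j+2) from by omega, Nat.choose_symm (by omega : j+2 ≤ k+2)]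
    -- the integer-level recursion for coefficient 2
    have hz : (P (k+4)).coeff 2
        = (P (k+3)).coeff 2 + (P (k+3)).coeff 1
          + (∑ i ∈ Icc 3 (k+2),
              ((k+2).choose (i-1) : Polynomial ℤ) * P i * P (k+5-i)).coeff 1 := by
      rw [hr, Polynomial.coeff_add, mul_add, mul_one, Polynomial.coeff_add,
        Polynomial.coeff_mul_X, Polynomial.coeff_X_mul]
    have hq : ((P (k+4)).coeff 2 : ℚ)
        = ((P (k+3)).coeff 2 : ℚ) + ((P (k+3)).coeff 1 : ℚ)
          + ((∑ i ∈ Icc 3 (k+2),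
              ((k+2).choose (i-1) : Polynomial ℤ) * P i * P (k+5-i)).coeff 1 : ℚ) := by
      exact_mod_cast congrArg (fun z : ℤ => (z : ℚ)) hz
    rw [show k+1+3 = k+4 from rfl, hq, ih, pc1 P h3 hrec k, e2, esplit, erefl, keyA k, keyB k]
    push_cast
    ring

end PLemmas

theorem stmt13 (P : ℕ → Polynomial ℤ)
    (h3 : P 3 = 1)
    (hrec : ∀ n, 3 < n → P n = P (n-1) * (1 + X) +
      X * ∑ i ∈ Finset.Icc 3 (n-2), ((n-2).choose (i-1) : Polynomial ℤ) * P i * P (n+1-i)) :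
    ∀ n : ℕ, 3 ≤ n →
      ((P n).coeff 2 : ℚ) = (1/2) * 3 ^ n - (((n : ℚ)^2 + 3*n + 4) / 8) * 2 ^ n
        + (3*(n : ℚ)^4 - 10*n^3 + 33*n^2 - 26*n + 12) / 24 := by
  intro n hn
  obtain ⟨k, rfl⟩ : ∃ k, n = k + 3 := ⟨n - 3, by omega⟩
  rw [pc2 P h3 hrec k]
  push_cast
  ring
end

section
/- For all k ≥ 1, given sequences a_{n,i} (i = k-1, k, k+1; n ≥ 3) of positive reals such that a_{n,i}·(i+1)!/(i+1)^{i+n-1} → 1 as n → ∞ for each i ∈ {k-1, k, k+1}, there exists N such that for all n ≥ N, (a_{n,k}/C(n-3,k))^2 ≥ (a_{n,k-1}/C(n-3,k-1))·(a_{n,k+1}/C(n-3,k+1)). -/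
set_option maxHeartbeats 1000000


open Filter

theorem stmt18 (k : ℕ) (hk : 1 ≤ k) (a : ℕ → ℕ → ℝ)
    (hpos : ∀ i ∈ ({k - 1, k, k + 1} : Set ℕ), ∀ n, 3 ≤ n → 0 < a n i)
    (hlim : ∀ i ∈ ({k - 1, k, k + 1} : Set ℕ),
      Tendsto (fun n : ℕ =>
        a n i * (Nat.factorial (i + 1)) / ((i : ℝ) + 1) ^ (i + n - 1)) atTop (nhds 1)) :
    ∃ N : ℕ, ∀ n, N ≤ n →
      (a n k / (Nat.choose (n - 3) k)) ^ 2 ≥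
        (a n (k - 1) / (Nat.choose (n - 3) (k - 1)))
          * (a n (k + 1) / (Nat.choose (n - 3) (k + 1))) := by
  have hk0 : (0:ℝ) < k := by exact_mod_cast hk
  have e1 : k - 1 + 1 = k := by omega
  have hF1 : (0:ℝ) < (Nat.factorial k : ℝ) := by exact_mod_cast k.factorial_pos
  have hF2 : (0:ℝ) < (Nat.factorial (k+1) : ℝ) := by exact_mod_cast (k+1).factorial_pos
  have hF3 : (0:ℝ) < (Nat.factorial (k+2) : ℝ) := by exact_mod_cast (k+2).factorial_pos
  -- cleaned-up limits
  have L1 : Tendsto (fun n : ℕ => a n (k-1) * (Nat.factorial k) / (k:ℝ)^(k+n-2))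
      atTop (nhds 1) := by
    refine (hlim (k-1) (by simp)).congr fun n => ?_
    rw [e1, show k-1+n-1 = k+n-2 from by omega, Nat.cast_sub hk]
    norm_num
  have L2 : Tendsto (fun n : ℕ => a n k * (Nat.factorial (k+1)) / ((k:ℝ)+1)^(k+n-1))
      atTop (nhds 1) := hlim k (by simp)
  have L3 : Tendsto (fun n : ℕ => a n (k+1) * (Nat.factorial (k+2)) / ((k:ℝ)+2)^(k+n))
      atTop (nhds 1) := by
    refine (hlim (k+1) (by simp)).congr fun n => ?_
    rw [show k+1+1 = k+2 from by omega, show k+1+n-1 = k+n from by omega]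
    push_cast
    ring_nf
  -- eventual bounds
  have hB1 : ∀ᶠ n : ℕ in atTop,
      1/2 * (k:ℝ)^(k+n-2) < a n (k-1) * (Nat.factorial k) ∧
      a n (k-1) * (Nat.factorial k) < 3/2 * (k:ℝ)^(k+n-2) := by
    filter_upwards [L1.eventually (eventually_gt_nhds (by norm_num : (1/2:ℝ) < 1)),
      L1.eventually (eventually_lt_nhds (by norm_num : (1:ℝ) < 3/2))] with n h1 h2
    have hP : (0:ℝ) < (k:ℝ)^(k+n-2) := pow_pos hk0 _
    rw [lt_div_iff₀ hP] at h1
    rw [div_lt_iff₀ hP] at h2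
    constructor <;> linarith
  have hB2 : ∀ᶠ n : ℕ in atTop,
      1/2 * ((k:ℝ)+1)^(k+n-1) < a n k * (Nat.factorial (k+1)) := by
    filter_upwards [L2.eventually (eventually_gt_nhds (by norm_num : (1/2:ℝ) < 1))] with n h1
    have hP : (0:ℝ) < ((k:ℝ)+1)^(k+n-1) := by positivity
    rw [lt_div_iff₀ hP] at h1
    linarith
  have hB3 : ∀ᶠ n : ℕ in atTop,
      a n (k+1) * (Nat.factorial (k+2)) < 3/2 * ((k:ℝ)+2)^(k+n) := by
    filter_upwards [L3.eventually (eventually_lt_nhds (by norm_num : (1:ℝ) < 3/2))] with n h2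
    have hP : (0:ℝ) < ((k:ℝ)+2)^(k+n) := by positivity
    rw [div_lt_iff₀ hP] at h2
    linarith
  -- the exponential ratio
  set X : ℝ := ((k:ℝ)+1)^2 with hX
  set Y : ℝ := (k:ℝ)*((k:ℝ)+2) with hY
  have hYpos : 0 < Y := by rw [hY]; positivity
  have hr : 1 < X / Y := by
    rw [lt_div_iff₀ hYpos, hX, hY]; nlinarith
  set A : ℝ := (1/4) * (((k:ℝ)+1)^k)^2 * k * (Nat.factorial k) * (Nat.factorial (k+2))
    with hA
  set B : ℝ := (9/2) * (k:ℝ)^(k-1) * ((k:ℝ)+2)^(k+1) * ((k:ℝ)+1) *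
    ((Nat.factorial (k+1) : ℝ))^2 with hB
  have hApos : 0 < A := by
    rw [hA]
    have h1 : (0:ℝ) < (((k:ℝ)+1)^k)^2 := by positivity
    nlinarith [mul_pos (mul_pos (mul_pos h1 hk0) hF1) hF3]
  have hcoreE : ∀ᶠ n : ℕ in atTop, B / A ≤ (X/Y)^(n-1) :=
    (Filter.tendsto_sub_atTop_nat 1).eventually
      ((tendsto_pow_atTop_atTop_of_one_lt hr).eventually_ge_atTop (B/A))
  have hmain : ∀ᶠ n : ℕ in atTop,
      (a n k / (Nat.choose (n - 3) k)) ^ 2 ≥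
        (a n (k - 1) / (Nat.choose (n - 3) (k - 1)))
          * (a n (k + 1) / (Nat.choose (n - 3) (k + 1))) := by
    filter_upwards [hB1, hB2, hB3, hcoreE, eventually_ge_atTop (k+4)] with n hb1 hb2 hb3
      hcore hn
    set m := n - 3 with hm
    have hn3 : 3 ≤ n := by omega
    have hkm : k + 1 ≤ m := by omega
    have hkm' : k ≤ m := by omega
    have hC1 : 0 < (Nat.choose m (k-1) : ℝ) := by
      exact_mod_cast Nat.choose_pos (by omega : k - 1 ≤ m)
    have hC2 : 0 < (Nat.choose m k : ℝ) := by exact_mod_cast Nat.choose_pos hkm'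
    have hC3 : 0 < (Nat.choose m (k+1) : ℝ) := by exact_mod_cast Nat.choose_pos hkm
    have ha1 : 0 < a n (k-1) := hpos _ (by simp) n hn3
    have ha2 : 0 < a n k := hpos _ (by simp) n hn3
    have ha3 : 0 < a n (k+1) := hpos _ (by simp) n hn3
    set mk : ℝ := (m:ℝ) - k with hmkdef
    have hmk1 : 1 ≤ mk := by
      have h : ((k:ℝ)+1) ≤ (m:ℝ) := by exact_mod_cast hkm
      rw [hmkdef]; linarith
    -- choose identities
    have c1 : (Nat.choose m (k+1) : ℝ) * ((k:ℝ)+1) = (Nat.choose m k : ℝ) * mk := by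
      have h0 := Nat.choose_succ_right_eq m k
      have h2 := congrArg (Nat.cast : ℕ → ℝ) h0
      push_cast [Nat.cast_sub hkm'] at h2
      rw [hmkdef]
      linarith
    have c2 : (Nat.choose m k : ℝ) * (k:ℝ) = (Nat.choose m (k-1) : ℝ) * (mk + 1) := by
      have h0 := Nat.choose_succ_right_eq m (k-1)
      rw [e1, show m - (k-1) = (m - k) + 1 from by omega] at h0
      have h2 := congrArg (Nat.cast : ℕ → ℝ) h0
      push_cast [Nat.cast_sub hkm'] at h2
      rw [hmkdef]
      linarith
    have E : (Nat.choose m k : ℝ)^2 * ((k:ℝ) * mk)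
        = ((Nat.choose m (k-1) : ℝ) * (Nat.choose m (k+1) : ℝ)) * (((k:ℝ)+1) * (mk+1)) := by
      linear_combination ((Nat.choose m k : ℝ) * mk) * c2
        - ((Nat.choose m (k-1) : ℝ) * (mk+1)) * c1
    -- power splitting
    have hP1 : (0:ℝ) < (k:ℝ)^(k+n-2) := pow_pos hk0 _
    have hP2 : (0:ℝ) < ((k:ℝ)+1)^(k+n-1) := by positivity
    have hP3 : (0:ℝ) < ((k:ℝ)+2)^(k+n) := by positivity
    have eP1 : (k:ℝ)^(k+n-2) = (k:ℝ)^(n-1) * (k:ℝ)^(k-1) := by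
      rw [← pow_add]; congr 1; omega
    have eP3 : ((k:ℝ)+2)^(k+n) = ((k:ℝ)+2)^(n-1) * ((k:ℝ)+2)^(k+1) := by
      rw [← pow_add]; congr 1; omega
    have eP2 : ((k:ℝ)+1)^(k+n-1) = ((k:ℝ)+1)^(n-1) * ((k:ℝ)+1)^k := by
      rw [← pow_add]; congr 1; omega
    have eX : X^(n-1) = (((k:ℝ)+1)^(n-1))^2 := by
      rw [hX, ← pow_mul, ← pow_mul, Nat.mul_comm]
    have hXY : B * Y^(n-1) ≤ X^(n-1) * A := by
      rw [div_pow, div_le_div_iff₀ hApos (pow_pos hYpos _)] at hcore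
      exact hcore
    -- the key inequality T
    have T : a n (k-1) * a n (k+1) * (((k:ℝ)+1) * (mk+1)) ≤ (a n k)^2 * ((k:ℝ) * mk) := by
      have hFprod : (0:ℝ) < (Nat.factorial k : ℝ) * ((Nat.factorial (k+1) : ℝ))^2
          * (Nat.factorial (k+2) : ℝ) := by positivity
      rw [← mul_le_mul_iff_of_pos_right hFprod]
      calc a n (k-1) * a n (k+1) * (((k:ℝ)+1) * (mk+1))
            * ((Nat.factorial k : ℝ) * ((Nat.factorial (k+1) : ℝ))^2 * (Nat.factorial (k+2) : ℝ))
          = ((a n (k-1) * (Nat.factorial k)) * (a n (k+1) * (Nat.factorial (k+2))))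
            * ((((k:ℝ)+1) * (mk+1)) * ((Nat.factorial (k+1) : ℝ))^2) := by ring
        _ ≤ ((3/2 * (k:ℝ)^(k+n-2)) * (3/2 * ((k:ℝ)+2)^(k+n)))
            * ((((k:ℝ)+1) * (mk+1)) * ((Nat.factorial (k+1) : ℝ))^2) := by
            apply mul_le_mul_of_nonneg_right
            · exact mul_le_mul (le_of_lt hb1.2) (le_of_lt hb3)
                (le_of_lt (mul_pos ha3 hF3)) (by positivity)
            · have : (0:ℝ) ≤ ((k:ℝ)+1) * (mk+1) :=
                mul_nonneg (by positivity) (by linarith)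
              positivity
        _ ≤ ((3/2 * (k:ℝ)^(k+n-2)) * (3/2 * ((k:ℝ)+2)^(k+n)))
            * ((((k:ℝ)+1) * (2*mk)) * ((Nat.factorial (k+1) : ℝ))^2) := by
            apply mul_le_mul_of_nonneg_left
            · apply mul_le_mul_of_nonneg_right
              · apply mul_le_mul_of_nonneg_left (by linarith) (by positivity)
              · positivity
            · positivity
        _ = (B * Y^(n-1)) * mk := by
            rw [eP1, eP3, hB, hY, mul_pow]; ring
        _ ≤ (X^(n-1) * A) * mk := mul_le_mul_of_nonneg_right hXY (by linarith)
        _ = (1/2 * ((k:ℝ)+1)^(k+n-1))^2 * (((k:ℝ) * mk)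
            * ((Nat.factorial k : ℝ) * (Nat.factorial (k+2) : ℝ))) := by
            rw [eX, eP2, hA]; ring
        _ ≤ (a n k * (Nat.factorial (k+1)))^2 * (((k:ℝ) * mk)
            * ((Nat.factorial k : ℝ) * (Nat.factorial (k+2) : ℝ))) := by
            apply mul_le_mul_of_nonneg_right
            · exact pow_le_pow_left₀ (by positivity) (le_of_lt hb2) 2
            · have h0 : (0:ℝ) ≤ (k:ℝ) * mk := by nlinarith
              positivity
        _ = (a n k)^2 * ((k:ℝ) * mk)
            * ((Nat.factorial k : ℝ) * ((Nat.factorial (k+1) : ℝ))^2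
              * (Nat.factorial (k+2) : ℝ)) := by ring
    -- assemble
    rw [ge_iff_le, div_mul_div_comm, div_pow,
      div_le_div_iff₀ (mul_pos hC1 hC3) (pow_pos hC2 2)]
    have hkmkpos : (0:ℝ) < (k:ℝ) * mk := by nlinarith
    rw [← mul_le_mul_iff_of_pos_right hkmkpos]
    calc a n (k-1) * a n (k+1) * ((Nat.choose m k : ℝ))^2 * ((k:ℝ) * mk)
        = (a n (k-1) * a n (k+1) * (((k:ℝ)+1) * (mk+1)))
          * ((Nat.choose m (k-1) : ℝ) * (Nat.choose m (k+1) : ℝ)) := by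
          linear_combination (a n (k-1) * a n (k+1)) * E
      _ ≤ ((a n k)^2 * ((k:ℝ) * mk))
          * ((Nat.choose m (k-1) : ℝ) * (Nat.choose m (k+1) : ℝ)) :=
          mul_le_mul_of_nonneg_right T (le_of_lt (mul_pos hC1 hC3))
      _ = (a n k)^2 * ((Nat.choose m (k-1) : ℝ) * (Nat.choose m (k+1) : ℝ))
          * ((k:ℝ) * mk) := by ring
  obtain ⟨N, hN⟩ := eventually_atTop.mp hmain
  exact ⟨N, hN⟩
end
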